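/- arXiv:2510.16496 — 6 statements merged into one kernel-verified Lean document; each statement's English description precedes it below -/
import Mathlib

section
/- Let M ≥ 2, h > 0, ε > 0, and let G be the M×M tridiagonal matrix with G_{11} = G_{MM} = −1/h², G_{ii} = −2/h² for 2 ≤ i ≤ M−1, G_{i,i+1} = G_{i+1,i} = 1/h² for 1 ≤ i ≤ M−1, and all other entries zero, and let D_h = I_M ⊗ G + G ⊗ I_M ∈ ℝ^{M²×M²}. Then for every constant a > 0 and every u ∈ ℝ^{M²}, ‖(aI − ε²D_h) u‖_∞ ≥ a ‖u‖_∞. -/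
/-- The `M × M` tridiagonal matrix `G` with `G_{11} = G_{MM} = -1/h²`,
`G_{ii} = -2/h²` for interior `i`, and `G_{i,i+1} = G_{i+1,i} = 1/h²`. -/
noncomputable def Gmat (M : ℕ) (h : ℝ) : Matrix (Fin M) (Fin M) ℝ :=
  Matrix.of fun i j =>
    if (i : ℕ) = (j : ℕ) then
      (if (i : ℕ) = 0 ∨ (i : ℕ) = M - 1 then -1 / h ^ 2 else -2 / h ^ 2)
    else if (i : ℕ) + 1 = (j : ℕ) ∨ (j : ℕ) + 1 = (i : ℕ) then 1 / h ^ 2 else 0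

/-- The discrete Laplacian `D_h = I_M ⊗ G + G ⊗ I_M ∈ ℝ^{M²×M²}`. -/
noncomputable def Dh (M : ℕ) (h : ℝ) : Matrix (Fin M × Fin M) (Fin M × Fin M) ℝ :=
  Matrix.kroneckerMap (· * ·) (1 : Matrix (Fin M) (Fin M) ℝ) (Gmat M h) +
    Matrix.kroneckerMap (· * ·) (Gmat M h) (1 : Matrix (Fin M) (Fin M) ℝ)


lemma sum_ind (M : ℕ) (c : ℝ) (n : ℕ) :
    ∑ j : Fin M, (if (j : ℕ) = n then c else 0) = if n < M then c else 0 := by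
  by_cases hn : n < M
  · rw [if_pos hn, Finset.sum_eq_single ⟨n, hn⟩]
    · simp
    · intro b _ hb
      rw [if_neg]
      intro e; exact hb (Fin.ext e)
    · simp
  · rw [if_neg hn]
    apply Finset.sum_eq_zero
    intro j _
    have := j.isLt
    rw [if_neg]; omega

lemma Goff (M : ℕ) (h : ℝ) (hh : 0 < h) {i j : Fin M} (hij : i ≠ j) :
    0 ≤ Gmat M h i j := by
  have hne : (i : ℕ) ≠ (j : ℕ) := fun e => hij (Fin.ext e)
  simp only [Gmat, Matrix.of_apply, if_neg hne]
  split_ifs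
  · positivity
  · exact le_refl 0

lemma Gdiag (M : ℕ) (h : ℝ) (hh : 0 < h) (i : Fin M) :
    Gmat M h i i ≤ 0 := by
  have h2 : (0:ℝ) < h ^ 2 := by positivity
  have key : Gmat M h i i = if (i:ℕ) = 0 ∨ (i:ℕ) = M - 1 then -1/h^2 else -2/h^2 := by
    simp [Gmat]
  rw [key]
  split_ifs <;> (rw [div_nonpos_iff]; right; exact ⟨by norm_num, le_of_lt h2⟩)

lemma Grow (M : ℕ) (hM : 2 ≤ M) (h : ℝ) (hh : 0 < h) (i : Fin M) :
    ∑ j, Gmat M h i j = 0 := by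
  have hdecomp : ∀ j : Fin M, Gmat M h i j =
      (if (j:ℕ) = (i:ℕ) then (if (i:ℕ) = 0 ∨ (i:ℕ) = M - 1 then -1/h^2 else -2/h^2) else 0)
      + (if (j:ℕ) = (i:ℕ)+1 then 1/h^2 else 0)
      + (if (j:ℕ) = (i:ℕ)-1 ∧ (i:ℕ) ≠ 0 then 1/h^2 else 0) := by
    intro j
    simp only [Gmat, Matrix.of_apply]
    have hj := j.isLt
    have hi := i.isLt
    split_ifs <;> first | ring1 | (exfalso; omega)
  rw [Finset.sum_congr rfl (fun j _ => hdecomp j)]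
  rw [Finset.sum_add_distrib, Finset.sum_add_distrib, sum_ind, sum_ind]
  have h3 : ∑ j : Fin M, (if (j:ℕ) = (i:ℕ)-1 ∧ (i:ℕ) ≠ 0 then 1/h^2 else 0)
      = if (i:ℕ) ≠ 0 then 1/h^2 else 0 := by
    by_cases hi0 : (i:ℕ) = 0
    · simp [hi0]
    · rw [if_pos hi0]
      have : ∀ j : Fin M, (if (j:ℕ) = (i:ℕ)-1 ∧ (i:ℕ) ≠ 0 then 1/h^2 else (0:ℝ))
          = if (j:ℕ) = (i:ℕ)-1 then 1/h^2 else 0 := by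
        intro j; simp [hi0]
      rw [Finset.sum_congr rfl (fun j _ => this j), sum_ind, if_pos]
      have := i.isLt; omega
  rw [h3]
  have hi := i.isLt
  have h20 : (h:ℝ)^2 ≠ 0 := by positivity
  by_cases h0 : (i:ℕ) = 0
  · have : ¬ ((i:ℕ) ≠ 0) := by omega
    rw [if_pos hi, if_pos (by omega : (i:ℕ)+1 < M), if_neg this, if_pos (Or.inl h0)]
    field_simp
    ring
  · by_cases hlast : (i:ℕ) = M - 1
    · rw [if_pos hi, if_neg (by omega : ¬ ((i:ℕ)+1 < M)), if_pos (by omega : (i:ℕ) ≠ 0),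
        if_pos (Or.inr hlast)]
      field_simp
      ring
    · rw [if_pos hi, if_pos (by omega : (i:ℕ)+1 < M), if_pos (by omega : (i:ℕ) ≠ 0),
        if_neg (by simp [h0, hlast])]
      field_simp
      ring
/-- For every `a > 0` and every `u ∈ ℝ^{M²}`, `‖(aI - ε²D_h) u‖_∞ ≥ a ‖u‖_∞`
(the norm on `Fin M × Fin M → ℝ` is the sup norm). -/
theorem stmt4 (M : ℕ) (hM : 2 ≤ M) (h ε : ℝ) (hh : 0 < h) (hε : 0 < ε)
    (a : ℝ) (ha : 0 < a) (u : Fin M × Fin M → ℝ) :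
    a * ‖u‖ ≤
      ‖(a • (1 : Matrix (Fin M × Fin M) (Fin M × Fin M) ℝ) - ε ^ 2 • Dh M h).mulVec u‖ := by
  set A : Matrix (Fin M × Fin M) (Fin M × Fin M) ℝ :=
    a • (1 : Matrix (Fin M × Fin M) (Fin M × Fin M) ℝ) - ε ^ 2 • Dh M h with hAdef
  haveI : Nonempty (Fin M) := ⟨⟨0, by omega⟩⟩
  obtain ⟨i₀, hle⟩ := Finite.exists_max (fun i : Fin M × Fin M => |u i|)
  have hnorm : ‖u‖ = |u i₀| := by
    apply le_antisymm
    · apply (pi_norm_le_iff_of_nonneg (abs_nonneg _)).2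
      intro j; rw [Real.norm_eq_abs]; exact hle j
    · rw [← Real.norm_eq_abs]; exact norm_le_pi_norm u i₀
  -- off-diagonal entries of Dh are nonnegative
  have hDoff : ∀ x y : Fin M × Fin M, x ≠ y → 0 ≤ Dh M h x y := by
    intro x y hxy
    simp only [Dh, Matrix.add_apply, Matrix.kroneckerMap_apply]
    by_cases h1 : x.1 = y.1
    · have h2 : x.2 ≠ y.2 := fun e => hxy (Prod.ext h1 e)
      rw [Matrix.one_apply_ne h2, mul_zero, add_zero]
      have hg := Goff M h hh h2
      have h1' : (1 : Matrix (Fin M) (Fin M) ℝ) x.1 y.1 = 1 := by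
        rw [h1, Matrix.one_apply_eq]
      rw [h1', one_mul]; exact hg
    · rw [Matrix.one_apply_ne h1, zero_mul, zero_add]
      have hg := Goff M h hh h1
      have h0 : (0:ℝ) ≤ (1 : Matrix (Fin M) (Fin M) ℝ) x.2 y.2 := by
        rw [Matrix.one_apply]; split_ifs <;> norm_num
      exact mul_nonneg hg h0
  have hAoff : ∀ y, y ≠ i₀ → A i₀ y ≤ 0 := by
    intro y hy
    have hne' : i₀ ≠ y := fun e => hy e.symm
    simp only [hAdef, Matrix.sub_apply, Matrix.smul_apply, smul_eq_mul,
      Matrix.one_apply_ne hne', mul_zero]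
    have hD := hDoff i₀ y hne'
    have := mul_nonneg (le_of_lt (pow_pos hε 2)) hD
    linarith
  have hAdiag : a ≤ A i₀ i₀ := by
    simp only [hAdef, Matrix.sub_apply, Matrix.smul_apply, smul_eq_mul,
      Matrix.one_apply_eq, mul_one]
    have hD : Dh M h i₀ i₀ ≤ 0 := by
      simp only [Dh, Matrix.add_apply, Matrix.kroneckerMap_apply, Matrix.one_apply_eq,
        one_mul, mul_one]
      have g1 := Gdiag M h hh i₀.1
      have g2 := Gdiag M h hh i₀.2
      linarith
    have := mul_nonpos_of_nonneg_of_nonpos (le_of_lt (pow_pos hε 2)) hD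
    linarith
  -- row sums
  have hGrow := Grow M hM h hh
  have hDrow : ∀ x : Fin M × Fin M, ∑ y, Dh M h x y = 0 := by
    intro x
    rw [Fintype.sum_prod_type]
    simp only [Dh, Matrix.add_apply, Matrix.kroneckerMap_apply]
    have inner : ∀ y1 : Fin M, (∑ y2 : Fin M,
        ((1 : Matrix (Fin M) (Fin M) ℝ) x.1 y1 * Gmat M h x.2 y2
          + Gmat M h x.1 y1 * (1 : Matrix (Fin M) (Fin M) ℝ) x.2 y2)) = Gmat M h x.1 y1 := by
      intro y1
      rw [Finset.sum_add_distrib, ← Finset.mul_sum, ← Finset.mul_sum, hGrow x.2, mul_zero,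
        zero_add]
      have hone : (∑ y2 : Fin M, (1 : Matrix (Fin M) (Fin M) ℝ) x.2 y2) = 1 := by
        simp [Matrix.one_apply]
      rw [hone, mul_one]
    rw [Finset.sum_congr rfl (fun y1 _ => inner y1), hGrow x.1]
  have hArow : ∑ y, A i₀ y = a := by
    simp only [hAdef, Matrix.sub_apply, Matrix.smul_apply, smul_eq_mul]
    rw [Finset.sum_sub_distrib, ← Finset.mul_sum, ← Finset.mul_sum, hDrow i₀, mul_zero,
      sub_zero]
    have hone : (∑ y : Fin M × Fin M,
        (1 : Matrix (Fin M × Fin M) (Fin M × Fin M) ℝ) i₀ y) = 1 := by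
      simp [Matrix.one_apply]
    rw [hone, mul_one]
  -- main estimate
  set c := |u i₀| with hc
  set S := ∑ y ∈ Finset.univ.erase i₀, A i₀ y * u y with hS
  have hmul : (A.mulVec u) i₀ = A i₀ i₀ * u i₀ + S := by
    have : (A.mulVec u) i₀ = ∑ y, A i₀ y * u y := rfl
    rw [this, hS, ← Finset.add_sum_erase _ _ (Finset.mem_univ i₀)]
  have hSbound : |S| ≤ ∑ y ∈ Finset.univ.erase i₀, -A i₀ y * c := by
    refine (Finset.abs_sum_le_sum_abs _ _).trans (Finset.sum_le_sum ?_)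
    intro y hy
    rw [abs_mul, abs_of_nonpos (hAoff y (Finset.ne_of_mem_erase hy))]
    exact mul_le_mul_of_nonneg_left (hle y)
      (neg_nonneg.2 (hAoff y (Finset.ne_of_mem_erase hy)))
  have hsum2 : A i₀ i₀ + ∑ y ∈ Finset.univ.erase i₀, A i₀ y = a := by
    rw [Finset.add_sum_erase _ _ (Finset.mem_univ i₀)]; exact hArow
  have hErase : (∑ y ∈ Finset.univ.erase i₀, -A i₀ y * c)
      = -(∑ y ∈ Finset.univ.erase i₀, A i₀ y) * c := by
    rw [← Finset.sum_mul, Finset.sum_neg_distrib]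
  have hkey : a * c ≤ |(A.mulVec u) i₀| := by
    rw [hmul]
    have h1 : |A i₀ i₀ * u i₀| = A i₀ i₀ * c := by
      rw [abs_mul, abs_of_nonneg (le_trans (le_of_lt ha) hAdiag)]
    have h2 : |A i₀ i₀ * u i₀| - |S| ≤ |A i₀ i₀ * u i₀ + S| := by
      have := abs_sub_abs_le_abs_sub (A i₀ i₀ * u i₀) (-S)
      simpa using this
    have h3 : a * c ≤ A i₀ i₀ * c - |S| := by
      have hb : |S| ≤ -(∑ y ∈ Finset.univ.erase i₀, A i₀ y) * c := hErase ▸ hSbound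
      have h4 : (A i₀ i₀ + ∑ y ∈ Finset.univ.erase i₀, A i₀ y) * c = a * c := by rw [hsum2]
      nlinarith [hb, h4]
    linarith [h1 ▸ h2, h3]
  calc a * ‖u‖ = a * c := by rw [hnorm]
    _ ≤ |(A.mulVec u) i₀| := hkey
    _ ≤ ‖A.mulVec u‖ := by rw [← Real.norm_eq_abs]; exact norm_le_pi_norm _ i₀
end

section
/- Let {a^{(n)}_j : 0 ≤ j ≤ n ≤ N−1} be real kernels satisfying a^{(n)}_0 ≥ a^{(n)}_1 ≥ ⋯ ≥ a^{(n)}_n > 0 for every 0 ≤ n ≤ N−1. Then the associated DCC kernels are nonnegative: p^{(n)}_{n−k} ≥ 0 for all 0 ≤ k ≤ n ≤ N−1. -/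
/-- If the kernels satisfy `a^{(n)}_0 ≥ a^{(n)}_1 ≥ ⋯ ≥ a^{(n)}_n > 0`, then the associated
DCC kernels are nonnegative: `p^{(n)}_{n-k} ≥ 0` for all `0 ≤ k ≤ n ≤ N-1`.
Here `a n j = a^{(n)}_j` (lag-indexed), `θ n k = θ^{(n)}_{n-k}` are the DOC kernels and
`p n k = p^{(n)}_{n-k}` are the DCC kernels. -/
theorem stmt6 (N : ℕ) (hN : 1 ≤ N) (a : ℕ → ℕ → ℝ)
    (hpos : ∀ n, n ≤ N - 1 → 0 < a n n)
    (hmono : ∀ n, n ≤ N - 1 → ∀ j, j < n → a n (j + 1) ≤ a n j)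
    (θ : ℕ → ℕ → ℝ)
    (hθ0 : ∀ n, θ n n = 1 / a n 0)
    (hθ : ∀ n k, k < n →
      θ n k = -(1 / a k 0) * ∑ j ∈ Finset.Icc (k + 1) n, θ n j * a j (j - k))
    (p : ℕ → ℕ → ℝ)
    (hp : ∀ n k, p n k = ∑ j ∈ Finset.Icc k n, θ j k) :
    ∀ n k, n ≤ N - 1 → k ≤ n → 0 ≤ p n k := by
  -- monotonicity in the lag index
  have amono : ∀ n, n ≤ N - 1 → ∀ i j, i ≤ j → j ≤ n → a n j ≤ a n i := by
    intro n hn i j hij hjn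
    induction j, hij using Nat.le_induction with
    | base => exact le_rfl
    | succ j hij ih =>
      exact (hmono n hn j (by omega)).trans (ih (by omega))
  -- positivity of all entries
  have apos : ∀ n j, n ≤ N - 1 → j ≤ n → 0 < a n j :=
    fun n j hn hj => lt_of_lt_of_le (hpos n hn) (amono n hn j n hj le_rfl)
  -- orthogonality identity for the DOC kernels
  have orth : ∀ n k, k ≤ n → n ≤ N - 1 →
      ∑ j ∈ Finset.Icc k n, θ n j * a j (j - k) = if k = n then 1 else 0 := by
    intro n k hk hn
    rw [Finset.Icc_eq_cons_Ioc hk, Finset.sum_cons]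
    by_cases hkn : k = n
    · subst hkn
      simp [hθ0, Nat.sub_self, (apos k 0 hn (Nat.zero_le _)).ne']
    · have hk' : k < n := lt_of_le_of_ne hk hkn
      have ha : a k 0 ≠ 0 := (apos k 0 (by omega) (Nat.zero_le _)).ne'
      rw [if_neg hkn, ← Finset.Icc_add_one_left_eq_Ioc, hθ n k hk', Nat.sub_self]
      field_simp
      ring
  -- the DCC kernels satisfy the complementary identity
  have key : ∀ n k, k ≤ n → n ≤ N - 1 →
      ∑ j ∈ Finset.Icc k n, p n j * a j (j - k) = 1 := by
    intro n k hk hn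
    have h1 : ∑ j ∈ Finset.Icc k n, p n j * a j (j - k)
        = ∑ j ∈ Finset.Icc k n, ∑ i ∈ Finset.Icc j n, θ i j * a j (j - k) := by
      refine Finset.sum_congr rfl fun j hj => ?_
      rw [hp, Finset.sum_mul]
    have h2 : ∑ j ∈ Finset.Icc k n, ∑ i ∈ Finset.Icc j n, θ i j * a j (j - k)
        = ∑ i ∈ Finset.Icc k n, ∑ j ∈ Finset.Icc k i, θ i j * a j (j - k) := by
      refine Finset.sum_comm' ?_
      intro j i
      simp only [Finset.mem_Icc]
      omega
    rw [h1, h2]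
    have h3 : ∑ i ∈ Finset.Icc k n, ∑ j ∈ Finset.Icc k i, θ i j * a j (j - k)
        = ∑ i ∈ Finset.Icc k n, if k = i then (1 : ℝ) else 0 := by
      refine Finset.sum_congr rfl fun i hi => ?_
      simp only [Finset.mem_Icc] at hi
      exact orth i k hi.1 (by omega)
    rw [h3, Finset.sum_ite_eq, if_pos (by simp [Finset.mem_Icc, hk])]
  intro n k hn hk
  -- the diagonal case
  have base : 0 ≤ p n n := by
    rw [hp, Finset.Icc_self, Finset.sum_singleton, hθ0]
    have := apos n 0 hn (Nat.zero_le _)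
    positivity
  -- downward induction on k
  have H : ∀ d k, k ≤ n → n - k ≤ d → 0 ≤ p n k := by
    intro d
    induction d with
    | zero =>
      intro k hk hd
      have hkn : k = n := by omega
      subst hkn; exact base
    | succ d ih =>
      intro k hk hd
      by_cases hkn : k = n
      · subst hkn; exact base
      · have hk' : k < n := lt_of_le_of_ne hk hkn
        have S1 := key n k hk hn
        have S2 := key n (k + 1) hk' hn
        rw [Finset.Icc_eq_cons_Ioc hk, Finset.sum_cons, ← Finset.Icc_add_one_left_eq_Ioc,
          Nat.sub_self] at S1
        have hdiff : ∑ j ∈ Finset.Icc (k + 1) n,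
            p n j * (a j (j - (k + 1)) - a j (j - k)) = p n k * a k 0 := by
          have e : ∑ j ∈ Finset.Icc (k + 1) n,
              p n j * (a j (j - (k + 1)) - a j (j - k))
              = (∑ j ∈ Finset.Icc (k + 1) n, p n j * a j (j - (k + 1)))
                - ∑ j ∈ Finset.Icc (k + 1) n, p n j * a j (j - k) := by
            rw [← Finset.sum_sub_distrib]
            exact Finset.sum_congr rfl fun j hj => by ring
          rw [e, S2]; linarith
        have hnn : 0 ≤ ∑ j ∈ Finset.Icc (k + 1) n,
            p n j * (a j (j - (k + 1)) - a j (j - k)) := by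
          refine Finset.sum_nonneg fun j hj => ?_
          simp only [Finset.mem_Icc] at hj
          have hpj : 0 ≤ p n j := ih j hj.2 (by omega)
          have hmj : a j (j - k) ≤ a j (j - (k + 1)) := by
            have h := hmono j (by omega) (j - (k + 1)) (by omega)
            have e : j - (k + 1) + 1 = j - k := by omega
            rwa [e] at h
          have : 0 ≤ a j (j - (k + 1)) - a j (j - k) := by linarith
          exact mul_nonneg hpj this
        have hak : 0 < a k 0 := apos k 0 (by omega) (Nat.zero_le _)
        nlinarith
  exact H (n - k) k hk le_rfl
end

section
/- Let 0 < α < 1, let 0 = t_0 < t_1 < ⋯ < t_N = T be a temporal mesh with step sizes τ_n = t_n − t_{n−1}, let a^{(n)}_{n−k} be the L1 kernels and p^{(n)}_{n−k} the associated DCC kernels. Then for every 0 ≤ n ≤ N−1 and every real sequence ψ^0, ψ^1, …, ψ^n: 2 ψ^n Σ_{k=0}^n a^{(n)}_{n−k} ψ^k ≥ a^{(n)}_0 |ψ^n|² + Σ_{k=0}^n p^{(n)}_{n−k} (Σ_{j=0}^k a^{(k)}_{k−j} ψ^j)² − Σ_{k=0}^{n−1} p^{(n−1)}_{n−1−k}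 (Σ_{j=0}^k a^{(k)}_{k−j} ψ^j)², with the convention that the last sum is 0 when n = 0. -/
/-- The L1 discrete convolution kernel, indexed by the lag: `L1kernel α t n j = a^{(n)}_j`,
so that `a^{(n)}_{n-k} = L1kernel α t n (n - k)` equals
`(1/(Γ(1-α) τ_{k+1})) ∫_{t_k}^{t_{k+1}} (t_{n+1} - s)^{-α} ds`. -/
noncomputable def L1kernel (α : ℝ) (t : ℕ → ℝ) (n j : ℕ) : ℝ :=
  (1 / (Real.Gamma (1 - α) * (t (n - j + 1) - t (n - j)))) *
    ∫ s in (t (n - j))..(t (n - j + 1)), (t (n + 1) - s) ^ (-α)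

open MeasureTheory intervalIntegral Set

noncomputable def Akern (α : ℝ) (t : ℕ → ℝ) (m k : ℕ) : ℝ :=
  (1 / (Real.Gamma (1 - α) * (t (k + 1) - t k))) *
    ∫ s in (t k)..(t (k + 1)), (t (m + 1) - s) ^ (-α)

lemma Akern_intble {α : ℝ} (hα1 : α < 1) (w c d : ℝ) :
    IntervalIntegrable (fun s => (w - s) ^ (-α)) volume c d := by
  have h := (intervalIntegrable_rpow' (a := w - c) (b := w - d)
    (by linarith : (-1:ℝ) < -α)).comp_sub_left w
  simpa using h

lemma t_mono {t : ℕ → ℝ} {N : ℕ} (hmono : ∀ n, n < N → t n < t (n + 1)) :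
    ∀ i j, i ≤ j → j ≤ N → t i ≤ t j := by
  intro i j hij hjN
  induction j with
  | zero => simp_all
  | succ j ih =>
    rcases Nat.lt_or_ge i (j+1) with h | h
    · exact le_trans (ih (Nat.lt_succ_iff.mp h) (by omega)) (hmono j (by omega)).le
    · have : i = j + 1 := by omega
      simp [this]

lemma t_strict {t : ℕ → ℝ} {N : ℕ} (hmono : ∀ n, n < N → t n < t (n + 1)) :
    ∀ i j, i < j → j ≤ N → t i < t j := by
  intro i j hij hjN
  have h1 : t i ≤ t (j - 1) := t_mono hmono i (j-1) (by omega) (by omega)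
  have h2 : t (j - 1) < t j := by
    have := hmono (j-1) (by omega)
    rwa [show j - 1 + 1 = j by omega] at this
  linarith

lemma L1_eq_Akern (α : ℝ) (t : ℕ → ℝ) {m k : ℕ} (hk : k ≤ m) :
    L1kernel α t m (m - k) = Akern α t m k := by
  unfold L1kernel Akern
  rw [Nat.sub_sub_self hk]

lemma Akern_pos {α : ℝ} (hα0 : 0 < α) (hα1 : α < 1) {t : ℕ → ℝ} {N : ℕ}
    (hmono : ∀ n, n < N → t n < t (n + 1)) {m k : ℕ} (hk : k ≤ m) (hm : m < N) :
    0 < Akern α t m k := by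
  have hτ : 0 < t (k + 1) - t k := by
    have := hmono k (by omega); linarith
  have hΓ : 0 < Real.Gamma (1 - α) := Real.Gamma_pos_of_pos (by linarith)
  have hI : 0 < ∫ s in (t k)..(t (k + 1)), (t (m + 1) - s) ^ (-α) := by
    apply intervalIntegral_pos_of_pos_on (Akern_intble hα1 _ _ _)
    · intro x hx
      have hx2 : x < t (m + 1) := by
        have : t (k+1) ≤ t (m+1) := t_mono hmono (k+1) (m+1) (by omega) (by omega)
        rcases hx with ⟨_, h2⟩; linarith
      exact Real.rpow_pos_of_pos (by linarith) _
    · linarith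
  exact mul_pos (by positivity) hI

lemma ae_ne_restrict (S : Set ℝ) (c : ℝ) : ∀ᵐ s ∂(volume.restrict S), s ≠ c := by
  have hne : ∀ᵐ s : ℝ, s ≠ c := by
    refine MeasureTheory.ae_iff.mpr ?_
    simpa using Real.volume_singleton
  exact hne.filter_mono (MeasureTheory.ae_mono MeasureTheory.Measure.restrict_le_self)

lemma Akern_antitone {α : ℝ} (hα0 : 0 < α) (hα1 : α < 1) {t : ℕ → ℝ} {N : ℕ}
    (hmono : ∀ n, n < N → t n < t (n + 1)) {m k : ℕ} (hk : k ≤ m) (hm : m + 2 ≤ N) :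
    Akern α t (m + 1) k ≤ Akern α t m k := by
  have hτ : 0 < t (k + 1) - t k := by have := hmono k (by omega); linarith
  have hΓ : 0 < Real.Gamma (1 - α) := Real.Gamma_pos_of_pos (by linarith)
  unfold Akern
  apply mul_le_mul_of_nonneg_left _ (by positivity)
  apply integral_mono_ae_restrict (by linarith) (Akern_intble hα1 _ _ _) (Akern_intble hα1 _ _ _)
  filter_upwards [ae_ne_restrict _ (t (k+1)),
    MeasureTheory.ae_restrict_mem measurableSet_Icc] with s hs hmem
  have hs1 : s < t (k + 1) := lt_of_le_of_ne hmem.2 hs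
  have h1 : t (k + 1) ≤ t (m + 1) := t_mono hmono _ _ (by omega) (by omega)
  have h2 : t (m + 1) ≤ t (m + 2) := t_mono hmono _ _ (by omega) (by omega)
  exact Real.rpow_le_rpow_of_nonpos (by linarith) (by linarith) (by linarith)

lemma Akern_key {α : ℝ} (hα0 : 0 < α) (hα1 : α < 1) {t : ℕ → ℝ} {N : ℕ}
    (hmono : ∀ n, n < N → t n < t (n + 1)) {k m n : ℕ}
    (hk : k + 1 ≤ m) (hmn : m ≤ n) (hn : n < N) :
    Akern α t m k * Akern α t n (k + 1) ≤ Akern α t n k * Akern α t m (k + 1) := by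
  have hΓ : 0 < Real.Gamma (1 - α) := Real.Gamma_pos_of_pos (by linarith)
  have hτ1 : 0 < t (k + 1) - t k := by have := hmono k (by omega); linarith
  have hτ2 : 0 < t (k + 2) - t (k + 1) := by have := hmono (k+1) (by omega); linarith
  set u := t (m + 1) with hu
  set v := t (n + 1) with hv
  have huv : u ≤ v := t_mono hmono _ _ (by omega) (by omega)
  have hk2u : t (k + 2) ≤ u := t_mono hmono _ _ (by omega) (by omega)
  -- inner inequality
  have inner : ∀ s ∈ Icc (t k) (t (k + 1)),
      (u - s) ^ (-α) * (∫ σ in (t (k+1))..(t (k+2)), (v - σ) ^ (-α))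
      ≤ (v - s) ^ (-α) * (∫ σ in (t (k+1))..(t (k+2)), (u - σ) ^ (-α)) := by
    intro s hsIcc
    have hsu : s < u := by have := hsIcc.2; linarith
    rw [← intervalIntegral.integral_const_mul, ← intervalIntegral.integral_const_mul]
    apply integral_mono_ae_restrict (by linarith) ((Akern_intble hα1 v _ _).const_mul _)
      ((Akern_intble hα1 u _ _).const_mul _)
    filter_upwards [ae_ne_restrict _ (t (k+2)),
      MeasureTheory.ae_restrict_mem measurableSet_Icc] with σ hσ hmem
    have hσu : σ < u := lt_of_lt_of_le (lt_of_le_of_ne hmem.2 hσ) hk2u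
    have hsσ : s ≤ σ := le_trans hsIcc.2 hmem.1
    have h1 : 0 < u - σ := by linarith
    have h2 : 0 < u - s := by linarith
    have hbase : (v - s) * (u - σ) ≤ (u - s) * (v - σ) := by nlinarith [mul_nonneg (by linarith : (0:ℝ) ≤ v - u) (by linarith : (0:ℝ) ≤ σ - s)]
    calc (u - s) ^ (-α) * (v - σ) ^ (-α) = ((u - s) * (v - σ)) ^ (-α) := by
          rw [Real.mul_rpow (by linarith) (by linarith)]
      _ ≤ ((v - s) * (u - σ)) ^ (-α) :=
          Real.rpow_le_rpow_of_nonpos (mul_pos (by linarith) h1) hbase (by linarith)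
      _ = (v - s) ^ (-α) * (u - σ) ^ (-α) := by
          rw [Real.mul_rpow (by linarith) (by linarith)]
  have outer : (∫ s in (t k)..(t (k+1)), (u - s) ^ (-α)) *
        (∫ σ in (t (k+1))..(t (k+2)), (v - σ) ^ (-α))
      ≤ (∫ s in (t k)..(t (k+1)), (v - s) ^ (-α)) *
        (∫ σ in (t (k+1))..(t (k+2)), (u - σ) ^ (-α)) := by
    rw [← intervalIntegral.integral_mul_const, ← intervalIntegral.integral_mul_const]
    exact integral_mono_on (by linarith) ((Akern_intble hα1 u _ _).mul_const _)
      ((Akern_intble hα1 v _ _).mul_const _) inner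
  unfold Akern
  rw [show k + 1 + 1 = k + 2 from rfl]
  have e1 : (0:ℝ) < 1 / (Real.Gamma (1 - α) * (t (k + 1) - t k)) := by positivity
  have e2 : (0:ℝ) < 1 / (Real.Gamma (1 - α) * (t (k + 2) - t (k + 1))) := by positivity
  calc 1 / (Real.Gamma (1 - α) * (t (k + 1) - t k)) * (∫ s in (t k)..(t (k+1)), (u - s) ^ (-α)) *
        (1 / (Real.Gamma (1 - α) * (t (k + 2) - t (k + 1))) *
          ∫ σ in (t (k+1))..(t (k+2)), (v - σ) ^ (-α))
      = (1 / (Real.Gamma (1 - α) * (t (k + 1) - t k))) *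
        (1 / (Real.Gamma (1 - α) * (t (k + 2) - t (k + 1)))) *
        ((∫ s in (t k)..(t (k+1)), (u - s) ^ (-α)) *
         (∫ σ in (t (k+1))..(t (k+2)), (v - σ) ^ (-α))) := by ring
    _ ≤ (1 / (Real.Gamma (1 - α) * (t (k + 1) - t k))) *
        (1 / (Real.Gamma (1 - α) * (t (k + 2) - t (k + 1)))) *
        ((∫ s in (t k)..(t (k+1)), (v - s) ^ (-α)) *
         (∫ σ in (t (k+1))..(t (k+2)), (u - σ) ^ (-α))) := by
        apply mul_le_mul_of_nonneg_left outer (by positivity)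
    _ = 1 / (Real.Gamma (1 - α) * (t (k + 1) - t k)) * (∫ s in (t k)..(t (k+1)), (v - s) ^ (-α)) *
        (1 / (Real.Gamma (1 - α) * (t (k + 2) - t (k + 1))) *
          ∫ σ in (t (k+1))..(t (k+2)), (u - σ) ^ (-α)) := by ring

lemma fin_sum_to_icc (M : ℕ) (F G : ℕ → ℕ → ℝ) (i k : ℕ) (hi : i ≤ M) :
    (∑ j : Fin (M + 1), (if (j : ℕ) ≤ i then F i j else 0) * (if k ≤ (j : ℕ) then G j k else 0))
      = ∑ j ∈ Finset.Icc k i, F i j * G j k := by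
  rw [Fin.sum_univ_eq_sum_range
    (fun j => (if j ≤ i then F i j else 0) * (if k ≤ j then G j k else 0))]
  rw [← Finset.sum_subset (show Finset.Icc k i ⊆ Finset.range (M+1) by
      intro x hx; simp only [Finset.mem_Icc] at hx; simp only [Finset.mem_range]; omega)
    (fun x _ hx => by
      simp only [Finset.mem_Icc, not_and_or, not_le] at hx
      rcases hx with h | h
      · rw [if_neg (show ¬ k ≤ x by omega), mul_zero]
      · rw [if_neg (show ¬ x ≤ i by omega), zero_mul])]
  apply Finset.sum_congr rfl
  intro x hx
  simp only [Finset.mem_Icc] at hx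
  rw [if_pos hx.2, if_pos hx.1]

lemma left_inv (M : ℕ) (A θ : ℕ → ℕ → ℝ)
    (h : ∀ n k, k ≤ n → n ≤ M → (∑ j ∈ Finset.Icc k n, θ n j * A j k) = if k = n then 1 else 0) :
    ∀ n k, k ≤ n → n ≤ M → (∑ j ∈ Finset.Icc k n, A n j * θ j k) = if k = n then 1 else 0 := by
  classical
  set P : Matrix (Fin (M + 1)) (Fin (M + 1)) ℝ :=
    fun i j => if (j : ℕ) ≤ (i : ℕ) then θ i j else 0 with hPdef
  set Q : Matrix (Fin (M + 1)) (Fin (M + 1)) ℝ :=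
    fun i j => if (j : ℕ) ≤ (i : ℕ) then A i j else 0 with hQdef
  have hPQ : P * Q = 1 := by
    ext i k
    rw [Matrix.mul_apply, Matrix.one_apply]
    have : ∀ j : Fin (M + 1), P i j * Q j k =
        (if (j : ℕ) ≤ (i : ℕ) then θ (i : ℕ) j else 0) *
        (if (k : ℕ) ≤ (j : ℕ) then A (j : ℕ) k else 0) := fun j => rfl
    rw [Finset.sum_congr rfl (fun j _ => this j), fin_sum_to_icc M θ A i k (by omega)]
    rcases le_or_gt (k : ℕ) (i : ℕ) with hki | hki
    · rw [h i k hki (by omega)]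
      by_cases hik : i = k
      · rw [if_pos (by rw [hik]), if_pos hik]
      · rw [if_neg (fun hc => hik (Fin.ext hc.symm)), if_neg hik]
    · rw [Finset.Icc_eq_empty (by omega), Finset.sum_empty,
        if_neg (fun hc : i = k => absurd (congrArg Fin.val hc) (by omega))]
  have hQP : Q * P = 1 := mul_eq_one_comm.mp hPQ
  intro n k hk hn
  have h2 := congrFun (congrFun hQP ⟨n, by omega⟩) ⟨k, by omega⟩
  rw [Matrix.mul_apply, Matrix.one_apply] at h2
  have h3 : ∀ j : Fin (M + 1),
      Q ⟨n, by omega⟩ j * P j ⟨k, by omega⟩ =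
      (if (j : ℕ) ≤ n then A n j else 0) * (if k ≤ (j : ℕ) then θ j k else 0) := fun j => rfl
  rw [Finset.sum_congr rfl (fun j _ => h3 j), fin_sum_to_icc M A θ n k hn] at h2
  rw [h2]
  by_cases hnk : n = k
  · rw [if_pos (by simp [hnk]), if_pos hnk.symm]
  · rw [if_neg (by simp [hnk]), if_neg (fun hc => hnk hc.symm)]

section abstractAlg
variable {M : ℕ} {A θ : ℕ → ℕ → ℝ}

lemma theta_diag (rinv : ∀ n k, k ≤ n → n ≤ M →
      (∑ j ∈ Finset.Icc k n, θ n j * A j k) = if k = n then 1 else 0)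
    {n : ℕ} (hn : n ≤ M) : θ n n * A n n = 1 := by
  have := rinv n n le_rfl hn
  simpa using this

lemma theta_diag_pos (pos : ∀ m k, k ≤ m → m ≤ M → 0 < A m k)
    (rinv : ∀ n k, k ≤ n → n ≤ M →
      (∑ j ∈ Finset.Icc k n, θ n j * A j k) = if k = n then 1 else 0)
    {n : ℕ} (hn : n ≤ M) : 0 < θ n n := by
  have h := theta_diag rinv hn
  have hA := pos n n le_rfl hn
  nlinarith

lemma theta_nonpos (pos : ∀ m k, k ≤ m → m ≤ M → 0 < A m k)
    (key : ∀ k m n, k + 1 ≤ m → m ≤ n → n ≤ M →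
      A m k * A n (k + 1) ≤ A n k * A m (k + 1))
    (rinv : ∀ n k, k ≤ n → n ≤ M →
      (∑ j ∈ Finset.Icc k n, θ n j * A j k) = if k = n then 1 else 0) :
    ∀ n, n ≤ M → ∀ k, k < n → θ n k ≤ 0 := by
  have linv := left_inv M A θ rinv
  intro n
  induction n using Nat.strong_induction_on with
  | _ n IH =>
    intro hn k hk
    have hn1 : 1 ≤ n := by omega
    -- split the left-inverse identity at top
    have hsplit : A n n * θ n k + (∑ j ∈ Finset.Icc k (n - 1), A n j * θ j k) = 0 := by
      have h0 := linv n k hk.le hn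
      rw [if_neg (by omega)] at h0
      rw [show n = (n - 1) + 1 by omega] at h0
      rw [Finset.sum_Icc_succ_top (by omega)] at h0
      rw [show (n - 1) + 1 = n by omega] at h0
      linarith
    -- diag positivity of θ k k
    have hθkk : 0 < θ k k := theta_diag_pos pos rinv (by omega)
    rcases Nat.eq_or_lt_of_le (Nat.succ_le_of_lt hk) with heq | hlt
    · -- n = k + 1
      have hkn : k = n - 1 := by omega
      have hsum : (∑ j ∈ Finset.Icc k (n - 1), A n j * θ j k) = A n k * θ k k := by
        rw [← hkn, Finset.Icc_self, Finset.sum_singleton]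
      have hAnn := pos n n le_rfl hn
      have hAnk := pos n k hk.le hn
      have : A n n * θ n k ≤ 0 := by nlinarith
      nlinarith
    · -- k + 1 < n
      have hk1n : k + 1 ≤ n - 1 := by omega
      set c : ℝ := A n (k + 1) / A (n - 1) (k + 1) with hc
      have hAn1k1 : 0 < A (n - 1) (k + 1) := pos (n - 1) (k + 1) (by omega) (by omega)
      have hAnk1 : 0 < A n (k + 1) := pos n (k + 1) (by omega) hn
      have hcpos : 0 < c := div_pos hAnk1 hAn1k1
      -- chain: ratio comparison
      have chain : ∀ j, k + 1 ≤ j → j ≤ n - 1 →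
          A n j * A (n - 1) (k + 1) ≤ A n (k + 1) * A (n - 1) j := by
        intro j hj1
        induction j, hj1 using Nat.le_induction with
        | base => intro _; rw [mul_comm]
        | succ j hj IH2 =>
          intro hj2
          have hIH2 := IH2 (by omega)
          have hkey := key j (n - 1) n (by omega) (by omega) hn
          have hAn1j : 0 < A (n - 1) j := pos (n - 1) j (by omega) (by omega)
          have hAnj : 0 < A n j := pos n j (by omega) hn
          have hAnj1 : 0 < A n (j + 1) := pos n (j + 1) (by omega) hn
          have hAn1j1 : 0 < A (n - 1) (j + 1) := pos (n - 1) (j + 1) (by omega) (by omega)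
          have h1 : A (n - 1) j * (A n (j + 1) * A (n - 1) (k + 1)) ≤
              A (n - 1) j * (A n (k + 1) * A (n - 1) (j + 1)) := by
            have e1 := mul_le_mul_of_nonneg_right hkey hAn1k1.le
            have e2 := mul_le_mul_of_nonneg_right hIH2 hAn1j1.le
            nlinarith
          exact le_of_mul_le_mul_left h1 hAn1j
      -- second zero identity at level n-1
      have hzero : (∑ j ∈ Finset.Icc k (n - 1), A (n - 1) j * θ j k) = 0 := by
        have h0 := linv (n - 1) k (by omega) (by omega)
        rw [if_neg (by omega)] at h0
        exact h0
      have hmain : A n n * θ n k =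
          -(∑ j ∈ Finset.Icc k (n - 1), (A n j - c * A (n - 1) j) * θ j k) := by
        have : (∑ j ∈ Finset.Icc k (n - 1), (A n j - c * A (n - 1) j) * θ j k) =
            (∑ j ∈ Finset.Icc k (n - 1), A n j * θ j k) -
            c * (∑ j ∈ Finset.Icc k (n - 1), A (n - 1) j * θ j k) := by
          rw [Finset.mul_sum, ← Finset.sum_sub_distrib]
          exact Finset.sum_congr rfl (fun x _ => by ring)
        rw [this, hzero]
        linarith
      have hterms : ∀ j ∈ Finset.Icc k (n - 1), 0 ≤ (A n j - c * A (n - 1) j) * θ j k := by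
        intro j hj
        simp only [Finset.mem_Icc] at hj
        rcases Nat.eq_or_lt_of_le hj.1 with hjk | hjk
        · -- j = k
          rw [← hjk]
          have hkey0 := key k (n - 1) n (by omega) (by omega) hn
          have hcoef : 0 ≤ A n k - c * A (n - 1) k := by
            rw [sub_nonneg, hc, div_mul_eq_mul_div, div_le_iff₀ hAn1k1]
            nlinarith
          exact mul_nonneg hcoef hθkk.le
        · -- k < j
          have hθjk : θ j k ≤ 0 := IH j (by omega) (by omega) k hjk
          have hcoef : A n j - c * A (n - 1) j ≤ 0 := by
            rw [sub_nonpos, hc, div_mul_eq_mul_div, le_div_iff₀ hAn1k1]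
            have := chain j hjk (by omega)
            nlinarith
          nlinarith [mul_nonneg (neg_nonneg.2 hcoef) (neg_nonneg.2 hθjk)]
      have hsumnn : 0 ≤ ∑ j ∈ Finset.Icc k (n - 1), (A n j - c * A (n - 1) j) * θ j k :=
        Finset.sum_nonneg hterms
      have hAnn := pos n n le_rfl hn
      nlinarith

end abstractAlg

lemma swap_tri (m : ℕ) (f : ℕ → ℕ → ℝ) :
    ∑ k ∈ Finset.range (m + 1), ∑ j ∈ Finset.range (k + 1), f k j
      = ∑ j ∈ Finset.range (m + 1), ∑ k ∈ Finset.Icc j m, f k j := by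
  have h1 : ∀ k ∈ Finset.range (m + 1), (∑ j ∈ Finset.range (k + 1), f k j)
      = ∑ j ∈ Finset.range (m + 1), if j ≤ k then f k j else 0 := by
    intro k hk
    simp only [Finset.mem_range] at hk
    rw [← Finset.sum_subset (show Finset.range (k+1) ⊆ Finset.range (m+1) by
        intro x hx; simp only [Finset.mem_range] at *; omega)
      (fun x _ hx => by
        simp only [Finset.mem_range] at hx
        rw [if_neg (by omega)])]
    exact Finset.sum_congr rfl (fun x hx => by
      simp only [Finset.mem_range] at hx
      rw [if_pos (by omega)])
  rw [Finset.sum_congr rfl h1, Finset.sum_comm]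
  apply Finset.sum_congr rfl
  intro j hj
  simp only [Finset.mem_range] at hj
  rw [← Finset.sum_subset (show Finset.Icc j m ⊆ Finset.range (m+1) by
      intro x hx; simp only [Finset.mem_Icc] at hx; simp only [Finset.mem_range]; omega)
    (fun x hx hx2 => by
      simp only [Finset.mem_Icc] at hx2
      simp only [Finset.mem_range] at hx
      rw [if_neg (by omega)])]
  exact Finset.sum_congr rfl (fun x hx => by
    simp only [Finset.mem_Icc] at hx
    rw [if_pos (by omega)])

section qsum
variable {M : ℕ} {A θ : ℕ → ℕ → ℝ}

lemma Aq_one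
    (rinv : ∀ n k, k ≤ n → n ≤ M →
      (∑ j ∈ Finset.Icc k n, θ n j * A j k) = if k = n then 1 else 0) :
    ∀ m, m ≤ M →
      (∑ k ∈ Finset.range (m + 1), A m k * ∑ j ∈ Finset.range (k + 1), θ k j) = 1 := by
  have linv := left_inv M A θ rinv
  intro m hm
  have h1 : (∑ k ∈ Finset.range (m + 1), A m k * ∑ j ∈ Finset.range (k + 1), θ k j)
      = ∑ k ∈ Finset.range (m + 1), ∑ j ∈ Finset.range (k + 1), A m k * θ k j := by
    exact Finset.sum_congr rfl (fun k _ => Finset.mul_sum _ _ _)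
  rw [h1, swap_tri m (fun k j => A m k * θ k j)]
  have h2 : ∀ j ∈ Finset.range (m + 1),
      (∑ k ∈ Finset.Icc j m, A m k * θ k j) = if j = m then 1 else 0 := by
    intro j hj
    simp only [Finset.mem_range] at hj
    exact linv m j (by omega) hm
  rw [Finset.sum_congr rfl h2, Finset.sum_ite_eq' (Finset.range (m+1)) m (fun _ => (1:ℝ))]
  rw [if_pos (Finset.self_mem_range_succ m)]

lemma q_nonneg (pos : ∀ m k, k ≤ m → m ≤ M → 0 < A m k)
    (anti : ∀ m k, k ≤ m → m + 1 ≤ M → A (m + 1) k ≤ A m k)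
    (rinv : ∀ n k, k ≤ n → n ≤ M →
      (∑ j ∈ Finset.Icc k n, θ n j * A j k) = if k = n then 1 else 0) :
    ∀ m, m ≤ M → 0 ≤ ∑ j ∈ Finset.range (m + 1), θ m j := by
  intro m
  induction m using Nat.strong_induction_on with
  | _ m IH =>
    intro hm
    rcases Nat.eq_zero_or_pos m with hm0 | hm0
    · subst hm0
      simpa using (theta_diag_pos pos rinv hm).le
    · have hAq := Aq_one rinv m hm
      have hAq' := Aq_one rinv (m - 1) (by omega)
      rw [Finset.sum_range_succ] at hAq
      have hstep : (∑ k ∈ Finset.range m, A m k * ∑ j ∈ Finset.range (k + 1), θ k j)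
          ≤ ∑ k ∈ Finset.range m, A (m - 1) k * ∑ j ∈ Finset.range (k + 1), θ k j := by
        apply Finset.sum_le_sum
        intro k hk
        simp only [Finset.mem_range] at hk
        have hq : 0 ≤ ∑ j ∈ Finset.range (k + 1), θ k j := IH k (by omega) (by omega)
        have ha : A m k ≤ A (m - 1) k := by
          have := anti (m - 1) k (by omega) (by omega)
          rwa [show m - 1 + 1 = m by omega] at this
        exact mul_le_mul_of_nonneg_right ha hq
      have hAq'' : (∑ k ∈ Finset.range m, A (m - 1) k * ∑ j ∈ Finset.range (k + 1), θ k j) = 1 := by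
        rw [show m = m - 1 + 1 by omega] at hAq' ⊢
        exact hAq'
      have hAmm : 0 < A m m := pos m m le_rfl hm
      nlinarith

end qsum

lemma final_ineq (A θ p : ℕ → ℕ → ℝ) (ψ : ℕ → ℝ) (n : ℕ)
    (hAnn : 0 < A n n)
    (hdiag : θ n n * A n n = 1)
    (hrinvrow : ∀ j, j ≤ n →
      (∑ i ∈ Finset.Icc j n, θ n i * A i j) = if j = n then 1 else 0)
    (hsignn : ∀ k, k < n → θ n k ≤ 0)
    (hqn : 0 ≤ ∑ k ∈ Finset.range (n + 1), θ n k)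
    (hp : ∀ m k, p m k = ∑ j ∈ Finset.Icc k m, θ j k) :
    A n n * (ψ n) ^ 2
      + ∑ k ∈ Finset.range (n + 1),
          p n k * (∑ j ∈ Finset.range (k + 1), A k j * ψ j) ^ 2
      - ∑ k ∈ Finset.range n,
          p (n - 1) k * (∑ j ∈ Finset.range (k + 1), A k j * ψ j) ^ 2
      ≤ 2 * ψ n * ∑ k ∈ Finset.range (n + 1), A n k * ψ k := by
  classical
  set L : ℕ → ℝ := fun k => ∑ j ∈ Finset.range (k + 1), A k j * ψ j with hLdef
  have hLk : ∀ k, (∑ j ∈ Finset.range (k + 1), A k j * ψ j) = L k := fun k => rfl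
  -- (1) p-difference reduces to θ row
  have hpd : (∑ k ∈ Finset.range (n + 1), p n k * (L k) ^ 2)
      - (∑ k ∈ Finset.range n, p (n - 1) k * (L k) ^ 2)
      = ∑ k ∈ Finset.range (n + 1), θ n k * (L k) ^ 2 := by
    have hpnn : p n n = θ n n := by rw [hp, Finset.Icc_self, Finset.sum_singleton]
    have hpk : ∀ k, k < n → p n k = p (n - 1) k + θ n k := by
      intro k hk
      rw [hp, hp]
      have hn' : n = (n - 1) + 1 := by omega
      conv_lhs => rw [hn']
      rw [Finset.sum_Icc_succ_top (by omega)]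
      rw [← hn']
    rw [Finset.sum_range_succ, Finset.sum_range_succ (fun k => θ n k * (L k)^2), hpnn]
    have h3 : (∑ k ∈ Finset.range n, p n k * (L k) ^ 2)
        = (∑ k ∈ Finset.range n, p (n - 1) k * (L k) ^ 2)
          + ∑ k ∈ Finset.range n, θ n k * (L k) ^ 2 := by
      rw [← Finset.sum_add_distrib]
      apply Finset.sum_congr rfl
      intro k hk
      simp only [Finset.mem_range] at hk
      rw [hpk k hk]; ring
    rw [h3]; ring
  -- (2) ψ n in terms of L
  have hψn : ψ n = ∑ k ∈ Finset.range (n + 1), θ n k * L k := by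
    have h1 : (∑ k ∈ Finset.range (n + 1), θ n k * L k)
        = ∑ k ∈ Finset.range (n + 1), ∑ j ∈ Finset.range (k + 1), θ n k * (A k j * ψ j) := by
      exact Finset.sum_congr rfl (fun k _ => Finset.mul_sum _ _ _)
    rw [h1, swap_tri n (fun k j => θ n k * (A k j * ψ j))]
    have h2 : ∀ j ∈ Finset.range (n + 1),
        (∑ k ∈ Finset.Icc j n, θ n k * (A k j * ψ j)) = (if j = n then ψ j else 0) := by
      intro j hj
      simp only [Finset.mem_range] at hj
      have h4 : (∑ k ∈ Finset.Icc j n, θ n k * (A k j * ψ j))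
          = (∑ k ∈ Finset.Icc j n, θ n k * A k j) * ψ j := by
        rw [Finset.sum_mul]
        exact Finset.sum_congr rfl (fun k _ => by ring)
      rw [h4, hrinvrow j (by omega)]
      by_cases hjn : j = n
      · rw [if_pos hjn, if_pos hjn, one_mul]
      · rw [if_neg hjn, if_neg hjn, zero_mul]
    rw [Finset.sum_congr rfl h2, Finset.sum_ite_eq' (Finset.range (n + 1)) n ψ,
      if_pos (Finset.self_mem_range_succ n)]
  -- abbreviations
  set S : ℝ := ∑ k ∈ Finset.range n, θ n k * L k with hS
  set W : ℝ := ∑ k ∈ Finset.range n, -θ n k with hW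
  set V : ℝ := ∑ k ∈ Finset.range n, (-θ n k) * (L k) ^ 2 with hV
  have hψn' : ψ n = θ n n * L n + S := by
    rw [hψn, Finset.sum_range_succ]; ring
  have hVnn : 0 ≤ V := Finset.sum_nonneg (fun k hk => by
    simp only [Finset.mem_range] at hk
    exact mul_nonneg (neg_nonneg.2 (hsignn k hk)) (sq_nonneg _))
  have haW : A n n * W ≤ 1 := by
    have h5 : (∑ k ∈ Finset.range (n + 1), θ n k) = θ n n - W := by
      rw [Finset.sum_range_succ, hW]
      rw [Finset.sum_neg_distrib]
      ring
    rw [h5] at hqn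
    nlinarith
  have hCS : S ^ 2 ≤ W * V := by
    have hterm : ∀ k ∈ Finset.range n,
        Real.sqrt (-θ n k) * (Real.sqrt (-θ n k) * L k) = -(θ n k * L k) := by
      intro k hk
      simp only [Finset.mem_range] at hk
      have h0 : 0 ≤ -θ n k := neg_nonneg.2 (hsignn k hk)
      rw [← mul_assoc, Real.mul_self_sqrt h0]; ring
    have h6 : (∑ k ∈ Finset.range n,
        Real.sqrt (-θ n k) * (Real.sqrt (-θ n k) * L k)) = -S := by
      rw [Finset.sum_congr rfl hterm, hS, ← Finset.sum_neg_distrib]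
    have h7 := Finset.sum_mul_sq_le_sq_mul_sq (Finset.range n)
      (fun k => Real.sqrt (-θ n k)) (fun k => Real.sqrt (-θ n k) * L k)
    rw [h6] at h7
    have h8 : (∑ k ∈ Finset.range n, Real.sqrt (-θ n k) ^ 2) = W := by
      apply Finset.sum_congr rfl
      intro k hk
      simp only [Finset.mem_range] at hk
      exact Real.sq_sqrt (neg_nonneg.2 (hsignn k hk))
    have h9 : (∑ k ∈ Finset.range n, (Real.sqrt (-θ n k) * L k) ^ 2) = V := by
      apply Finset.sum_congr rfl
      intro k hk
      simp only [Finset.mem_range] at hk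
      rw [mul_pow, Real.sq_sqrt (neg_nonneg.2 (hsignn k hk))]
    rw [h8, h9] at h7
    calc S ^ 2 = (-S) ^ 2 := by ring
      _ ≤ W * V := h7
  have key1 : A n n * S ^ 2 ≤ V := by
    have e1 : A n n * S ^ 2 ≤ A n n * (W * V) := mul_le_mul_of_nonneg_left hCS hAnn.le
    have e2 : (A n n * W) * V ≤ 1 * V := mul_le_mul_of_nonneg_right haW hVnn
    nlinarith
  -- final algebra
  have hsplit2 : (∑ k ∈ Finset.range n, θ n k * (L k) ^ 2) = -V := by
    have h10 : V = -∑ k ∈ Finset.range n, θ n k * (L k) ^ 2 := by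
      rw [hV, ← Finset.sum_neg_distrib]
      exact Finset.sum_congr rfl (fun k _ => by ring)
    linarith
  have hsum : (∑ k ∈ Finset.range (n + 1), θ n k * (L k) ^ 2)
      = θ n n * (L n) ^ 2 - V := by
    rw [Finset.sum_range_succ, hsplit2]; ring
  have hdiag' : A n n * θ n n = 1 := by rw [mul_comm]; exact hdiag
  have hE : 2 * ψ n * L n - (A n n * (ψ n) ^ 2 + (θ n n * (L n) ^ 2 - V))
      = (θ n n * (L n) ^ 2 + 2 * S * L n) * (1 - A n n * θ n n)
        + (V - A n n * S ^ 2) := by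
    rw [hψn']; ring
  rw [hdiag'] at hE
  have hE2 : 2 * ψ n * L n - (A n n * (ψ n) ^ 2 + (θ n n * (L n) ^ 2 - V))
      = V - A n n * S ^ 2 := by rw [hE]; ring
  simp only [hLk]
  linarith [hpd, hsum, hE2, key1]


/-- The quadratic lower-bound inequality of the L1 kernels and their DCC kernels:
for any real sequence `ψ⁰, …, ψⁿ`,
`2 ψⁿ Σ_{k≤n} a^{(n)}_{n-k} ψᵏ ≥ a^{(n)}_0 |ψⁿ|² + Σ_{k≤n} p^{(n)}_{n-k} (Lᵏ)² -
 Σ_{k≤n-1} p^{(n-1)}_{n-1-k} (Lᵏ)²` where `Lᵏ = Σ_{j≤k} a^{(k)}_{k-j} ψʲ`.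
Here `θ n k = θ^{(n)}_{n-k}` are the DOC kernels and `p n k = p^{(n)}_{n-k}` the DCC kernels. -/
theorem stmt7 (α T : ℝ) (hα0 : 0 < α) (hα1 : α < 1)
    (N : ℕ) (hN : 1 ≤ N) (t : ℕ → ℝ)
    (ht0 : t 0 = 0) (htT : t N = T)
    (hmono : ∀ n, n < N → t n < t (n + 1))
    (θ p : ℕ → ℕ → ℝ)
    (hθ0 : ∀ n, θ n n = 1 / L1kernel α t n 0)
    (hθ : ∀ n k, k < n → θ n k =
      -(1 / L1kernel α t k 0) * ∑ j ∈ Finset.Icc (k + 1) n, θ n j * L1kernel α t j (j - k))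
    (hp : ∀ n k, p n k = ∑ j ∈ Finset.Icc k n, θ j k)
    (n : ℕ) (hn : n ≤ N - 1) (ψ : ℕ → ℝ) :
    L1kernel α t n 0 * (ψ n) ^ 2
      + ∑ k ∈ Finset.range (n + 1),
          p n k * (∑ j ∈ Finset.range (k + 1), L1kernel α t k (k - j) * ψ j) ^ 2
      - ∑ k ∈ Finset.range n,
          p (n - 1) k * (∑ j ∈ Finset.range (k + 1), L1kernel α t k (k - j) * ψ j) ^ 2
      ≤ 2 * ψ n * ∑ k ∈ Finset.range (n + 1), L1kernel α t n (n - k) * ψ k := by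

  classical
  have pos : ∀ m k, k ≤ m → m ≤ N - 1 → 0 < Akern α t m k :=
    fun m k hk hm => Akern_pos hα0 hα1 hmono hk (by omega)
  have key : ∀ k m n', k + 1 ≤ m → m ≤ n' → n' ≤ N - 1 →
      Akern α t m k * Akern α t n' (k + 1) ≤ Akern α t n' k * Akern α t m (k + 1) :=
    fun k m n' h1 h2 h3 => Akern_key hα0 hα1 hmono h1 h2 (by omega)
  have anti : ∀ m k, k ≤ m → m + 1 ≤ N - 1 → Akern α t (m + 1) k ≤ Akern α t m k :=
    fun m k hk hm => Akern_antitone hα0 hα1 hmono hk (by omega)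
  have hL1diag : ∀ m, L1kernel α t m 0 = Akern α t m m := by
    intro m
    have h := L1_eq_Akern α t (le_refl m)
    rwa [Nat.sub_self] at h
  have rinv : ∀ n' k, k ≤ n' → n' ≤ N - 1 →
      (∑ j ∈ Finset.Icc k n', θ n' j * Akern α t j k) = if k = n' then 1 else 0 := by
    intro n' k hk hn'
    rcases eq_or_lt_of_le hk with heq | hlt
    · subst heq
      rw [Finset.Icc_self, Finset.sum_singleton, if_pos rfl, hθ0 k, hL1diag k]
      have hAkk := pos k k le_rfl hn'
      field_simp
    · rw [if_neg (by omega)]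
      have hIcc : Finset.Icc k n' = insert k (Finset.Icc (k + 1) n') := by
        ext x; simp only [Finset.mem_Icc, Finset.mem_insert]; omega
      rw [hIcc, Finset.sum_insert (by simp only [Finset.mem_Icc]; omega)]
      have hsc : (∑ j ∈ Finset.Icc (k + 1) n', θ n' j * L1kernel α t j (j - k))
          = ∑ j ∈ Finset.Icc (k + 1) n', θ n' j * Akern α t j k := by
        apply Finset.sum_congr rfl
        intro j hj
        simp only [Finset.mem_Icc] at hj
        rw [L1_eq_Akern α t (by omega : k ≤ j)]
      have hθnk := hθ n' k hlt
      rw [hsc, hL1diag k] at hθnk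
      rw [hθnk]
      have hAkk := pos k k le_rfl (by omega)
      field_simp
      ring
  have hsign := theta_nonpos pos key rinv
  have hqn := q_nonneg pos anti rinv n hn
  have einner : ∀ k, k ≤ N - 1 →
      (∑ j ∈ Finset.range (k + 1), L1kernel α t k (k - j) * ψ j)
        = ∑ j ∈ Finset.range (k + 1), Akern α t k j * ψ j := by
    intro k hk
    apply Finset.sum_congr rfl
    intro j hj
    simp only [Finset.mem_range] at hj
    rw [L1_eq_Akern α t (by omega : j ≤ k)]
  have e1 : (∑ k ∈ Finset.range (n + 1),
        p n k * (∑ j ∈ Finset.range (k + 1), L1kernel α t k (k - j) * ψ j) ^ 2)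
      = ∑ k ∈ Finset.range (n + 1),
        p n k * (∑ j ∈ Finset.range (k + 1), Akern α t k j * ψ j) ^ 2 := by
    apply Finset.sum_congr rfl
    intro k hk
    simp only [Finset.mem_range] at hk
    rw [einner k (by omega)]
  have e2 : (∑ k ∈ Finset.range n,
        p (n - 1) k * (∑ j ∈ Finset.range (k + 1), L1kernel α t k (k - j) * ψ j) ^ 2)
      = ∑ k ∈ Finset.range n,
        p (n - 1) k * (∑ j ∈ Finset.range (k + 1), Akern α t k j * ψ j) ^ 2 := by
    apply Finset.sum_congr rfl
    intro k hk
    simp only [Finset.mem_range] at hk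
    rw [einner k (by omega)]
  have e3 : (∑ k ∈ Finset.range (n + 1), L1kernel α t n (n - k) * ψ k)
      = ∑ k ∈ Finset.range (n + 1), Akern α t n k * ψ k := by
    apply Finset.sum_congr rfl
    intro k hk
    simp only [Finset.mem_range] at hk
    rw [L1_eq_Akern α t (by omega : k ≤ n)]
  rw [hL1diag n, e1, e2, e3]
  exact final_ineq (Akern α t) θ p ψ n (pos n n le_rfl hn) (theta_diag rinv hn)
    (fun j hj => rinv n j hj hn) (fun k hk => hsign n hn k hk) hqn hp
end

section
/- Let 0 < α < 1, let 0 = t_0 < ⋯ < t_N = T be a temporal mesh with step sizes τ_n, and let {B^{(n)}_k : 0 ≤ k ≤ n ≤ N−1} be discrete kernels satisfying: (A1) B^{(n)}_0 ≥ B^{(n)}_1 ≥ ⋯ ≥ B^{(n)}_n > 0 for each n; (A2) there is a constant π_B > 0 with B^{(n)}_{n−k} ≥ (1/(π_B τ_{k+1})) ∫_{t_k}^{t_{k+1}} (t_{n+1} − s)^{−α}/Γ(1−α) ds for all 0 ≤ k ≤ n. Then the DCC kernels p̃^{(n)}_{n−k} associated with B satisfy 0 ≤ p̃^{(n)}_{n−k}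 ≤ π_B Γ(2−α) τ_{k+1}^α for all 0 ≤ k ≤ n ≤ N−1. -/
/-- Bounds on the DCC kernels of discrete kernels `B` satisfying assumptions A1 and A2.
Here `B n j = B^{(n)}_j` (lag-indexed), `θ n k = θ̃^{(n)}_{n-k}` are the DOC kernels and
`p n k = p̃^{(n)}_{n-k}` are the DCC kernels: under A1 (monotone positive kernels) and
A2 (lower bound by the weakly singular kernel averages, with constant `π_B`), it holds
that `0 ≤ p̃^{(n)}_{n-k} ≤ π_B Γ(2-α) τ_{k+1}^α`. -/
theorem stmt10 (α T πB : ℝ) (hα0 : 0 < α) (hα1 : α < 1) (hπB : 0 < πB)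
    (N : ℕ) (hN : 1 ≤ N) (t : ℕ → ℝ)
    (ht0 : t 0 = 0) (htT : t N = T)
    (hmono : ∀ n, n < N → t n < t (n + 1))
    (B : ℕ → ℕ → ℝ)
    (hA1pos : ∀ n, n ≤ N - 1 → 0 < B n n)
    (hA1mono : ∀ n, n ≤ N - 1 → ∀ j, j < n → B n (j + 1) ≤ B n j)
    (hA2 : ∀ n, n ≤ N - 1 → ∀ k, k ≤ n →
      (1 / (πB * (t (k + 1) - t k))) *
          ∫ s in (t k)..(t (k + 1)), (t (n + 1) - s) ^ (-α) / Real.Gamma (1 - α)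
        ≤ B n (n - k))
    (θ p : ℕ → ℕ → ℝ)
    (hθ0 : ∀ n, θ n n = 1 / B n 0)
    (hθ : ∀ n k, k < n →
      θ n k = -(1 / B k 0) * ∑ j ∈ Finset.Icc (k + 1) n, θ n j * B j (j - k))
    (hp : ∀ n k, p n k = ∑ j ∈ Finset.Icc k n, θ j k) :
    ∀ n, n ≤ N - 1 → ∀ k, k ≤ n →
      0 ≤ p n k ∧ p n k ≤ πB * Real.Gamma (2 - α) * (t (k + 1) - t k) ^ α := by
  -- basic facts
  have hτpos : ∀ k, k ≤ N - 1 → 0 < t (k + 1) - t k := by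
    intro k hk
    have hkN : k < N := by omega
    linarith [hmono k hkN]
  -- B is antitone in its second argument
  have hBanti : ∀ n, n ≤ N - 1 → ∀ i j, i ≤ j → j ≤ n → B n j ≤ B n i := by
    intro n hn i j hij hjn
    induction j with
    | zero =>
      have : i = 0 := Nat.le_zero.mp hij
      simp [this]
    | succ j ih =>
      rcases Nat.lt_or_ge i (j + 1) with h | h
      · have : B n (j + 1) ≤ B n j := hA1mono n hn j (by omega)
        exact this.trans (ih (by omega) (by omega))
      · have : i = j + 1 := by omega
        simp [this]
  have hBpos : ∀ n, n ≤ N - 1 → ∀ j, j ≤ n → 0 < B n j := by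
    intro n hn j hj
    exact lt_of_lt_of_le (hA1pos n hn) (hBanti n hn j n hj le_rfl)
  -- orthogonality of DOC kernels
  have horth : ∀ n, n ≤ N - 1 → ∀ k, k ≤ n →
      (∑ j ∈ Finset.Icc k n, θ n j * B j (j - k)) = if k = n then 1 else 0 := by
    intro n hn k hk
    rcases eq_or_lt_of_le hk with heq | hlt
    · rw [heq]
      simp only [Finset.Icc_self, Finset.sum_singleton, Nat.sub_self, ↓reduceIte]
      rw [hθ0 n]
      field_simp [ne_of_gt (hBpos n hn 0 (Nat.zero_le n))]
    · rw [if_neg (Nat.ne_of_lt hlt)]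
      rw [← Finset.add_sum_Ioc_eq_sum_Icc hk, ← Finset.Icc_add_one_left_eq_Ioc]
      rw [Nat.sub_self, hθ n k hlt]
      have hBk0 : B k 0 ≠ 0 := ne_of_gt (hBpos k (by omega) 0 (Nat.zero_le k))
      field_simp
      ring
  -- DCC identity: ∑_{j=k}^n p n j * B j (j-k) = 1
  have hD : ∀ n, n ≤ N - 1 → ∀ k, k ≤ n →
      (∑ j ∈ Finset.Icc k n, p n j * B j (j - k)) = 1 := by
    intro n
    induction n with
    | zero =>
      intro hn k hk
      interval_cases k
      simp only [Finset.Icc_self, Finset.sum_singleton, Nat.sub_self]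
      rw [hp 0 0]
      simp only [Finset.Icc_self, Finset.sum_singleton]
      rw [hθ0 0]
      field_simp [ne_of_gt (hBpos 0 hn 0 le_rfl)]
    | succ n ih =>
      intro hn k hk
      have hn' : n ≤ N - 1 := by omega
      rcases eq_or_lt_of_le hk with heq | hlt
      · subst heq
        simp only [Finset.Icc_self, Finset.sum_singleton, Nat.sub_self]
        rw [hp (n + 1) (n + 1)]
        simp only [Finset.Icc_self, Finset.sum_singleton]
        rw [hθ0 (n + 1)]
        field_simp [ne_of_gt (hBpos (n + 1) hn 0 (Nat.zero_le _))]
      · have hk' : k ≤ n := by omega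
        have hsplit : ∀ j ∈ Finset.Icc k (n + 1),
            p (n + 1) j * B j (j - k) = p n j * B j (j - k) + θ (n + 1) j * B j (j - k) := by
          intro j hj
          have hj' : j ≤ n + 1 := (Finset.mem_Icc.mp hj).2
          rw [hp (n + 1) j, Finset.sum_Icc_succ_top hj', ← hp n j]
          ring
        rw [Finset.sum_congr rfl hsplit, Finset.sum_add_distrib]
        have h1 : (∑ j ∈ Finset.Icc k (n + 1), p n j * B j (j - k)) = 1 := by
          rw [Finset.sum_Icc_succ_top (by omega : k ≤ n + 1)]
          have hzero : p n (n + 1) = 0 := by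
            rw [hp n (n + 1), Finset.Icc_eq_empty (by omega), Finset.sum_empty]
          rw [hzero, ih hn' k hk', zero_mul, add_zero]
        have h2 := horth (n + 1) hn k hk
        rw [if_neg (Nat.ne_of_lt hlt)] at h2
        rw [h1, h2, add_zero]
  -- nonnegativity of p
  have hpnonneg : ∀ n, n ≤ N - 1 → ∀ k, k ≤ n → 0 ≤ p n k := by
    intro n hn
    have key : ∀ m k, k ≤ n → n ≤ k + m → 0 ≤ p n k := by
      intro m
      induction m with
      | zero =>
        intro k hk hkm
        have hkn : k = n := by omega
        rw [hkn, hp n n]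
        simp only [Finset.Icc_self, Finset.sum_singleton]
        rw [hθ0 n]
        have hb := hBpos n hn 0 (Nat.zero_le n)
        positivity
      | succ m ih =>
        intro k hk hkm
        rcases eq_or_lt_of_le hk with heq | hlt
        · rw [heq, hp n n]
          simp only [Finset.Icc_self, Finset.sum_singleton]
          rw [hθ0 n]
          have hb := hBpos n hn 0 (Nat.zero_le n)
          positivity
        · have h1 := hD n hn k hk
          have h2 := hD n hn (k + 1) hlt
          rw [← Finset.add_sum_Ioc_eq_sum_Icc hk, ← Finset.Icc_add_one_left_eq_Ioc, Nat.sub_self] at h1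
          have heq : p n k * B k 0 =
              ∑ j ∈ Finset.Icc (k + 1) n,
                (p n j * B j (j - (k + 1)) - p n j * B j (j - k)) := by
            rw [Finset.sum_sub_distrib, h2]
            linarith
          have hnn : 0 ≤ p n k * B k 0 := by
            rw [heq]
            apply Finset.sum_nonneg
            intro j hj
            obtain ⟨hj1, hj2⟩ := Finset.mem_Icc.mp hj
            have hpj : 0 ≤ p n j := ih j hj2 (by omega)
            have hmonoj : B j (j - k) ≤ B j (j - (k + 1)) := by
              have hrw : j - k = (j - (k + 1)) + 1 := by omega
              rw [hrw]
              exact hA1mono j (by omega) (j - (k + 1)) (by omega)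
            have : p n j * B j (j - k) ≤ p n j * B j (j - (k + 1)) :=
              mul_le_mul_of_nonneg_left hmonoj hpj
            linarith
          have hBk0 : 0 < B k 0 := hBpos k (by omega) 0 (Nat.zero_le k)
          exact nonneg_of_mul_nonneg_right (mul_comm (p n k) (B k 0) ▸ hnn) hBk0
    intro k hk
    exact key n k hk (by omega)
  -- lower bound on B k 0 from A2
  have hΓpos : 0 < Real.Gamma (1 - α) := Real.Gamma_pos_of_pos (by linarith)
  have hΓ2 : Real.Gamma (2 - α) = (1 - α) * Real.Gamma (1 - α) := by
    have : (2 : ℝ) - α = (1 - α) + 1 := by ring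
    rw [this, Real.Gamma_add_one (by linarith)]
  have hΓ2pos : 0 < Real.Gamma (2 - α) := by
    rw [hΓ2]; exact mul_pos (by linarith) hΓpos
  have hB0low : ∀ k, k ≤ N - 1 →
      1 / (πB * Real.Gamma (2 - α) * (t (k + 1) - t k) ^ α) ≤ B k 0 := by
    intro k hk
    have hτ := hτpos k hk
    have h := hA2 k hk k le_rfl
    rw [Nat.sub_self] at h
    have hI : (∫ s in (t k)..(t (k + 1)), (t (k + 1) - s) ^ (-α) / Real.Gamma (1 - α))
        = (t (k + 1) - t k) ^ (1 - α) / ((1 - α) * Real.Gamma (1 - α)) := by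
      rw [intervalIntegral.integral_div]
      rw [intervalIntegral.integral_comp_sub_left (fun x => x ^ (-α)) (t (k + 1))]
      rw [sub_self]
      rw [integral_rpow (Or.inl (by linarith))]
      rw [Real.zero_rpow (by linarith), sub_zero]
      rw [show -α + 1 = 1 - α by ring]
      field_simp
    rw [hI] at h
    refine le_trans (le_of_eq ?_) h
    rw [hΓ2]
    have hτα : (0:ℝ) < (t (k + 1) - t k) ^ α := Real.rpow_pos_of_pos hτ α
    have hτα1 : (0:ℝ) < (t (k + 1) - t k) ^ (1 - α) := Real.rpow_pos_of_pos hτ (1 - α)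
    have hkey : (t (k + 1) - t k) ^ α * (t (k + 1) - t k) ^ (1 - α) = t (k + 1) - t k := by
      rw [← Real.rpow_add hτ, show α + (1 - α) = 1 by ring, Real.rpow_one]
    have e1 : 1 / (πB * (t (k + 1) - t k)) *
          ((t (k + 1) - t k) ^ (1 - α) / ((1 - α) * Real.Gamma (1 - α)))
        = (t (k + 1) - t k) ^ (1 - α)
          / (πB * (t (k + 1) - t k) * ((1 - α) * Real.Gamma (1 - α))) := by
      rw [div_mul_div_comm, one_mul]
    have h1α : (0:ℝ) < 1 - α := by linarith
    rw [e1, div_eq_div_iff (by positivity) (by positivity)]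
    linear_combination (-(πB * ((1 - α) * Real.Gamma (1 - α)))) * hkey
  -- conclusion
  intro n hn k hk
  have hk' : k ≤ N - 1 := le_trans hk hn
  refine ⟨hpnonneg n hn k hk, ?_⟩
  have hD1 := hD n hn k hk
  rw [← Finset.add_sum_Ioc_eq_sum_Icc hk, ← Finset.Icc_add_one_left_eq_Ioc, Nat.sub_self] at hD1
  have hrest : 0 ≤ ∑ j ∈ Finset.Icc (k + 1) n, p n j * B j (j - k) := by
    apply Finset.sum_nonneg
    intro j hj
    obtain ⟨hj1, hj2⟩ := Finset.mem_Icc.mp hj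
    exact mul_nonneg (hpnonneg n hn j hj2)
      (le_of_lt (hBpos j (by omega) (j - k) (by omega)))
  have hBk0 : 0 < B k 0 := hBpos k hk' 0 (Nat.zero_le k)
  have hle : p n k * B k 0 ≤ 1 := by linarith
  have hlow := hB0low k hk'
  have hτα : (0:ℝ) < (t (k + 1) - t k) ^ α := Real.rpow_pos_of_pos (hτpos k hk') α
  have hcpos : 0 < πB * Real.Gamma (2 - α) * (t (k + 1) - t k) ^ α := by positivity
  have h1 : p n k ≤ 1 / B k 0 := (le_div_iff₀ hBk0).mpr hle
  refine le_trans h1 ?_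
  rw [div_le_iff₀ hBk0]
  calc (1:ℝ) = (1 / (πB * Real.Gamma (2 - α) * (t (k + 1) - t k) ^ α))
        * (πB * Real.Gamma (2 - α) * (t (k + 1) - t k) ^ α) := by field_simp
    _ ≤ B k 0 * (πB * Real.Gamma (2 - α) * (t (k + 1) - t k) ^ α) := by
        apply mul_le_mul_of_nonneg_right (hB0low k hk') (le_of_lt hcpos)
    _ = πB * Real.Gamma (2 - α) * (t (k + 1) - t k) ^ α * B k 0 := by ring
end

section
/- Let M ≥ 2, h > 0, ε > 0, κ ≥ 2, and let D_h = I_M ⊗ G + G ⊗ I_M be the discrete Laplacian matrix built from the M×M tridiagonal matrix G with G_{11} = G_{MM} = −1/h², G_{ii} = −2/h² (2 ≤ i ≤ M−1), G_{i,i+1} = G_{i+1,i} = 1/h². Let F(x) = ¼(x²−1)², f_κ(x) = x³ − (1+κ)x, and define E_h(Φ) = −(h²ε²/2) Φᵀ D_h Φ + h² Σ_{i=1}^{M²} F(Φ_i) for Φ ∈ ℝ^{M²}. Then for all U, V ∈ ℝ^{M²} whose entries all lie in [−1,1]: E_h(U) − E_h(V) ≤ h² (U−V)ᵀ( κU − ε²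 D_h U + f_κ(V) ) + (ε²h²/2) (U−V)ᵀ D_h (U−V) − (κh²/2) Σ_{i=1}^{M²} (U_i − V_i)², where f_κ is applied entrywise. -/
open Matrix

/-- The discrete free energy `E_h(Φ) = -(h²ε²/2) Φᵀ D_h Φ + h² Σ_i F(Φ_i)` with
`F(x) = ¼(x²-1)²`. -/
noncomputable def Eh (M : ℕ) (h ε : ℝ) (Φ : Fin M × Fin M → ℝ) : ℝ :=
  -(h ^ 2 * ε ^ 2 / 2) * (Φ ⬝ᵥ (Dh M h).mulVec Φ) +
    h ^ 2 * ∑ i, (1 / 4) * ((Φ i) ^ 2 - 1) ^ 2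

lemma Gmat_symm (M : ℕ) (h : ℝ) (i j : Fin M) : Gmat M h i j = Gmat M h j i := by
  simp only [Gmat, Matrix.of_apply]
  split_ifs <;> first | rfl | omega

lemma bilin_symm {n : Type*} [Fintype n] (D : Matrix n n ℝ)
    (hD : ∀ i j, D i j = D j i) (x y : n → ℝ) :
    x ⬝ᵥ D.mulVec y = y ⬝ᵥ D.mulVec x := by
  simp only [dotProduct, Matrix.mulVec, dotProduct, Finset.mul_sum]
  rw [Finset.sum_comm]
  refine Finset.sum_congr rfl fun i _ => Finset.sum_congr rfl fun j _ => ?_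
  rw [hD]; ring

lemma key_pt (u v κ : ℝ) (hκ : 2 ≤ κ) (hu : u ∈ Set.Icc (-1:ℝ) 1)
    (hv : v ∈ Set.Icc (-1:ℝ) 1) :
    1/4 * (u^2 - 1)^2 - 1/4 * (v^2 - 1)^2 ≤
      κ * ((u - v) * u) + (u - v) * (v^3 - (1 + κ) * v) - κ/2 * (u - v)^2 := by
  obtain ⟨hu1, hu2⟩ := hu
  obtain ⟨hv1, hv2⟩ := hv
  have hident : 1/4 * (u^2 - 1)^2 - 1/4 * (v^2 - 1)^2 - (u - v) * (v^3 - v) - (u - v)^2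
      = (u - v)^2 * (((u + v)/2)^2 + v^2/2 - 3/2) := by ring
  have hneg : ((u + v)/2)^2 + v^2/2 - 3/2 ≤ 0 := by nlinarith
  have h0 : (u - v)^2 * (((u + v)/2)^2 + v^2/2 - 3/2) ≤ 0 :=
    mul_nonpos_of_nonneg_of_nonpos (sq_nonneg _) hneg
  have hring : κ * ((u - v) * u) + (u - v) * (v^3 - (1 + κ) * v) - κ/2 * (u - v)^2
      = (u - v) * (v^3 - v) + κ/2 * (u - v)^2 := by ring
  have hk : 0 ≤ (κ - 2) * (u - v)^2 :=
    mul_nonneg (by linarith) (sq_nonneg _)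
  nlinarith [hident, h0, hk]

/-- Discrete energy difference estimate: for all `U, V ∈ ℝ^{M²}` with entries in `[-1,1]`,
`E_h(U) - E_h(V) ≤ h² (U-V)ᵀ(κU - ε²D_hU + f_κ(V)) + (ε²h²/2)(U-V)ᵀD_h(U-V)
 - (κh²/2) Σ_i (U_i - V_i)²`, where `f_κ(x) = x³ - (1+κ)x` acts entrywise. -/
theorem stmt15 (M : ℕ) (hM : 2 ≤ M) (h ε κ : ℝ) (hh : 0 < h) (hε : 0 < ε) (hκ : 2 ≤ κ)
    (U V : Fin M × Fin M → ℝ)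
    (hU : ∀ i, U i ∈ Set.Icc (-1 : ℝ) 1) (hV : ∀ i, V i ∈ Set.Icc (-1 : ℝ) 1) :
    Eh M h ε U - Eh M h ε V ≤
      h ^ 2 * ((U - V) ⬝ᵥ
          (κ • U - ε ^ 2 • (Dh M h).mulVec U + fun i => (V i) ^ 3 - (1 + κ) * V i))
        + (ε ^ 2 * h ^ 2 / 2) * ((U - V) ⬝ᵥ (Dh M h).mulVec (U - V))
        - (κ * h ^ 2 / 2) * ∑ i, (U i - V i) ^ 2 := by
  set D := Dh M h with hDdef
  have hDsymm : ∀ i j, D i j = D j i := by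
    intro i j
    simp only [hDdef, Dh, Matrix.add_apply, Matrix.kroneckerMap_apply]
    rw [Gmat_symm M h i.2 j.2, Gmat_symm M h i.1 j.1]
    by_cases h1 : i.1 = j.1 <;> by_cases h2 : i.2 = j.2 <;>
      simp_all [Matrix.one_apply, eq_comm]
  have hsymm := bilin_symm D hDsymm
  have hquad : U ⬝ᵥ D.mulVec U = V ⬝ᵥ D.mulVec V
      + 2 * ((U - V) ⬝ᵥ D.mulVec U) - (U - V) ⬝ᵥ D.mulVec (U - V) := by
    have h1 : (U - V) ⬝ᵥ D.mulVec U = U ⬝ᵥ D.mulVec U - V ⬝ᵥ D.mulVec U := by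
      rw [sub_dotProduct]
    have h2 : (U - V) ⬝ᵥ D.mulVec (U - V) =
        U ⬝ᵥ D.mulVec U - V ⬝ᵥ D.mulVec U - (U ⬝ᵥ D.mulVec V - V ⬝ᵥ D.mulVec V) := by
      rw [Matrix.mulVec_sub, dotProduct_sub, sub_dotProduct,
        sub_dotProduct]
    have h3 := hsymm V U
    linarith
  have hdot : (U - V) ⬝ᵥ (κ • U - ε ^ 2 • D.mulVec U + fun i => (V i) ^ 3 - (1 + κ) * V i)
      = κ * ((U - V) ⬝ᵥ U) - ε ^ 2 * ((U - V) ⬝ᵥ D.mulVec U)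
        + (U - V) ⬝ᵥ (fun i => (V i) ^ 3 - (1 + κ) * V i) := by
    rw [dotProduct_add, dotProduct_sub, dotProduct_smul,
      dotProduct_smul, smul_eq_mul, smul_eq_mul]
  have hsum : ∑ i, (1/4 : ℝ) * ((U i)^2 - 1)^2 - ∑ i, (1/4 : ℝ) * ((V i)^2 - 1)^2 ≤
      κ * ((U - V) ⬝ᵥ U) + (U - V) ⬝ᵥ (fun i => (V i) ^ 3 - (1 + κ) * V i)
        - κ/2 * ∑ i, (U i - V i)^2 := by
    simp only [dotProduct, Pi.sub_apply, Finset.mul_sum]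
    rw [← Finset.sum_sub_distrib, ← Finset.sum_add_distrib, ← Finset.sum_sub_distrib]
    exact Finset.sum_le_sum fun i _ => key_pt (U i) (V i) κ hκ (hU i) (hV i)
  have hh2 : (0:ℝ) < h ^ 2 := by positivity
  have hm := mul_le_mul_of_nonneg_left hsum (le_of_lt hh2)
  simp only [Eh, hdot, ← hDdef, hquad]
  nlinarith [hm]
end

section
/- (MBP preservation of the first-order stabilized L1 scheme.) Let 0 < α < 1, ε > 0, κ ≥ 2, M ≥ 2, h > 0, and let 0 = t_0 < ⋯ < t_N = T be a temporal mesh with L1 kernels a^{(n)}_{n−k}. Let D_h = I_M ⊗ G + G ⊗ I_M be the discrete Laplacian matrix and f_κ(x) = x³ − (1+κ)x applied entrywise. Suppose Φ^0, Φ^1, …, Φ^N ∈ ℝ^{M²} satisfy ‖Φ^0‖_∞ ≤ 1 and, for every 0 ≤ n ≤ N−1, the scheme equation Σ_{k=0}^n a^{(n)}_{n−k}(Φ^{k+1} − Φ^k) + κΦ^{n+1} − ε² D_h Φ^{n+1} + f_κ(Φ^n) = 0. Then ‖Φ^n‖_∞ ≤ 1 for all 0 ≤ n ≤ N, regardless of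 the time-step sizes. -/
open Matrix

lemma rpow_tangent (β s : ℝ) (hs : 0 ≤ s) (hβ0 : 0 ≤ β) (hβ1 : β ≤ 1) :
    s ^ β ≤ 1 + β * (s - 1) := by
  have h := Real.geom_mean_le_arith_mean2_weighted (by linarith : (0:ℝ) ≤ 1 - β) hβ0
    zero_le_one hs (by ring)
  rw [Real.one_rpow] at h
  linarith

lemma rpow_lb (α x y : ℝ) (hα0 : 0 < α) (hα1 : α < 1) (hy : 0 ≤ y) (hx : 0 < x)
    (hyx : y ≤ x) : (1 - α) * x ^ (-α) * (x - y) ≤ x ^ (1 - α) - y ^ (1 - α) := by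
  have ht := rpow_tangent (1 - α) (y / x) (by positivity) (by linarith) (by linarith)
  have e2 : (y / x) ^ (1 - α) = y ^ (1 - α) / x ^ (1 - α) := Real.div_rpow hy hx.le _
  have hxp : (0:ℝ) < x ^ (1 - α) := Real.rpow_pos_of_pos hx _
  have e3 : x ^ (-α) * x = x ^ (1 - α) := by
    have h2 := Real.rpow_add hx (-α) 1
    rw [Real.rpow_one] at h2
    rw [show (1 - α) = -α + 1 by ring, h2]
  have e4 : (y / x) * x ^ (1 - α) = y * x ^ (-α) := by
    rw [← e3]; field_simp
  rw [e2] at ht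
  have h5 := mul_le_mul_of_nonneg_right ht hxp.le
  rw [div_mul_cancel₀ _ (ne_of_gt hxp)] at h5
  nlinarith [h5, e3, e4]

lemma rpow_ub (α x y : ℝ) (hα0 : 0 < α) (hα1 : α < 1) (hy : 0 < y)
    (hyx : y ≤ x) : x ^ (1 - α) - y ^ (1 - α) ≤ (1 - α) * y ^ (-α) * (x - y) := by
  have ht := rpow_tangent (1 - α) (x / y) (div_nonneg (by linarith) hy.le) (by linarith)
    (by linarith)
  have e2 : (x / y) ^ (1 - α) = x ^ (1 - α) / y ^ (1 - α) := Real.div_rpow (by linarith) hy.le _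
  have hyp : (0:ℝ) < y ^ (1 - α) := Real.rpow_pos_of_pos hy _
  have e3 : y ^ (-α) * y = y ^ (1 - α) := by
    have h2 := Real.rpow_add hy (-α) 1
    rw [Real.rpow_one] at h2
    rw [show (1 - α) = -α + 1 by ring, h2]
  have e4 : (x / y) * y ^ (1 - α) = x * y ^ (-α) := by
    rw [← e3]; field_simp
  rw [e2] at ht
  have h5 := mul_le_mul_of_nonneg_right ht hyp.le
  rw [div_mul_cancel₀ _ (ne_of_gt hyp)] at h5
  nlinarith [h5, e3, e4]

lemma int_closed (α c a b : ℝ) (hα1 : α < 1) :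
    (∫ s in a..b, (c - s) ^ (-α)) = ((c - a) ^ (1 - α) - (c - b) ^ (1 - α)) / (1 - α) := by
  rw [intervalIntegral.integral_comp_sub_left (fun x => x ^ (-α)) c,
    integral_rpow (Or.inl (by linarith : (-1:ℝ) < -α))]
  rw [show -α + 1 = 1 - α by ring]

lemma kernel_pos (α a b c : ℝ) (hα0 : 0 < α) (hα1 : α < 1) (hab : a < b) (hbc : b ≤ c) :
    0 < (1 / (Real.Gamma (1 - α) * (b - a))) * ∫ s in a..b, (c - s) ^ (-α) := by
  rw [int_closed α c a b hα1]
  have hΓ : 0 < Real.Gamma (1 - α) := Real.Gamma_pos_of_pos (by linarith)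
  have hlt : (c - b) ^ (1 - α) < (c - a) ^ (1 - α) :=
    Real.rpow_lt_rpow (by linarith) (by linarith) (by linarith)
  exact mul_pos (one_div_pos.mpr (mul_pos hΓ (by linarith)))
    (div_pos (by linarith) (by linarith))

lemma kernel_mono (α a b d c : ℝ) (hα0 : 0 < α) (hα1 : α < 1) (hab : a < b) (hbd : b < d)
    (hdc : d ≤ c) :
    (1 / (Real.Gamma (1 - α) * (b - a))) * (∫ s in a..b, (c - s) ^ (-α)) ≤
      (1 / (Real.Gamma (1 - α) * (d - b))) * ∫ s in b..d, (c - s) ^ (-α) := by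
  have hΓ : 0 < Real.Gamma (1 - α) := Real.Gamma_pos_of_pos (by linarith)
  have h1α : (0:ℝ) < 1 - α := by linarith
  rw [int_closed α c a b hα1, int_closed α c b d hα1]
  have hg : 0 < (c - b) ^ (-α) := Real.rpow_pos_of_pos (by linarith) _
  have h1 : (c - a) ^ (1 - α) - (c - b) ^ (1 - α) ≤ (1 - α) * (c - b) ^ (-α) * (b - a) := by
    have h := rpow_ub α (c - a) (c - b) hα0 hα1 (by linarith) (by linarith)
    rw [show (c - a) - (c - b) = b - a by ring] at h
    exact h
  have h2 : (1 - α) * (c - b) ^ (-α) * (d - b) ≤ (c - b) ^ (1 - α) - (c - d) ^ (1 - α) := by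
    have h := rpow_lb α (c - b) (c - d) hα0 hα1 (by linarith) (by linarith) (by linarith)
    rw [show (c - b) - (c - d) = d - b by ring] at h
    exact h
  have key : ((c - a) ^ (1 - α) - (c - b) ^ (1 - α)) * (d - b) ≤
      ((c - b) ^ (1 - α) - (c - d) ^ (1 - α)) * (b - a) := by
    nlinarith [mul_le_mul_of_nonneg_right h1 (by linarith : (0:ℝ) ≤ d - b),
      mul_le_mul_of_nonneg_right h2 (by linarith : (0:ℝ) ≤ b - a)]
  rw [one_div_mul_eq_div, one_div_mul_eq_div, div_div, div_div,
    div_le_div_iff₀ (mul_pos h1α (mul_pos hΓ (by linarith)))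
      (mul_pos h1α (mul_pos hΓ (by linarith)))]
  nlinarith [mul_le_mul_of_nonneg_right key (le_of_lt (mul_pos h1α hΓ))]

lemma L1kernel_eq (α : ℝ) (t : ℕ → ℝ) (n k : ℕ) (hk : k ≤ n) :
    L1kernel α t n (n - k) = (1 / (Real.Gamma (1 - α) * (t (k + 1) - t k))) *
      ∫ s in (t k)..(t (k + 1)), (t (n + 1) - s) ^ (-α) := by
  simp only [L1kernel, Nat.sub_sub_self hk]

lemma fcube_bound (κ x : ℝ) (hκ : 2 ≤ κ) (hx : |x| ≤ 1) : |x ^ 3 - (1 + κ) * x| ≤ κ := by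
  rw [abs_le] at hx ⊢
  constructor
  · nlinarith [mul_nonneg (by linarith : (0:ℝ) ≤ 1 - x)
      (by nlinarith [sq_nonneg x, hx.1, hx.2] : (0:ℝ) ≤ κ - x - x ^ 2)]
  · nlinarith [mul_nonneg (by linarith : (0:ℝ) ≤ 1 + x)
      (by nlinarith [sq_nonneg x, hx.1, hx.2] : (0:ℝ) ≤ κ + x - x ^ 2)]

lemma abel_sum (a x : ℕ → ℝ) (n : ℕ) :
    ∑ k ∈ Finset.range (n + 1), a k * (x (k + 1) - x k) =
      a n * x (n + 1) - a 0 * x 0 - ∑ k ∈ Finset.range n, (a (k + 1) - a k) * x (k + 1) := by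
  induction n with
  | zero => simp; ring
  | succ m ih => rw [Finset.sum_range_succ, ih, Finset.sum_range_succ]; ring

lemma sum_ite_val (M : ℕ) (v : ℕ) (c : ℝ) :
    ∑ j : Fin M, (if (j : ℕ) = v then c else 0) = if v < M then c else 0 := by
  by_cases hv : v < M
  · rw [if_pos hv, Finset.sum_eq_single (⟨v, hv⟩ : Fin M)]
    · simp
    · intro j _ hj
      rw [if_neg]
      intro hc
      exact hj (Fin.ext hc)
    · simp
  · rw [if_neg hv]
    apply Finset.sum_eq_zero
    intro j _
    rw [if_neg]
    omega

lemma Gmat_decomp (M : ℕ) (h : ℝ) (i j : Fin M) :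
    Gmat M h i j =
      (if (j : ℕ) = (i : ℕ) then
        (if (i : ℕ) = 0 ∨ (i : ℕ) = M - 1 then -1 / h ^ 2 else -2 / h ^ 2) else 0)
      + (if (j : ℕ) = (i : ℕ) + 1 then 1 / h ^ 2 else 0)
      + (if (j : ℕ) + 1 = (i : ℕ) then 1 / h ^ 2 else 0) := by
  simp only [Gmat, Matrix.of_apply]
  split_ifs <;> first | ring1 | (exfalso; omega)

lemma Gmat_row_sum (M : ℕ) (h : ℝ) (hM : 2 ≤ M) (i : Fin M) :
    ∑ j : Fin M, Gmat M h i j = 0 := by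
  have hi := i.isLt
  simp only [Gmat_decomp, Finset.sum_add_distrib]
  rw [sum_ite_val, sum_ite_val]
  have h3 : ∑ j : Fin M, (if (j : ℕ) + 1 = (i : ℕ) then 1 / h ^ 2 else 0)
      = if (i : ℕ) ≠ 0 then 1 / h ^ 2 else 0 := by
    by_cases hz : (i : ℕ) = 0
    · rw [if_neg (by omega)]
      apply Finset.sum_eq_zero; intro j _; rw [if_neg]; omega
    · rw [if_pos hz]
      have := sum_ite_val M ((i : ℕ) - 1) (1 / h ^ 2)
      rw [if_pos (by omega)] at this
      rw [← this]
      apply Finset.sum_congr rfl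
      intro j _
      congr 1
      · simp only [eq_iff_iff]; omega
  rw [h3, if_pos hi]
  split_ifs <;> first | ring1 | (exfalso; omega)

lemma Gmat_offdiag (M : ℕ) (h : ℝ) {i j : Fin M} (hij : i ≠ j) : 0 ≤ Gmat M h i j := by
  simp only [Gmat, Matrix.of_apply]
  have : (i : ℕ) ≠ (j : ℕ) := fun hc => hij (Fin.ext hc)
  rw [if_neg this]
  split_ifs <;> positivity

lemma one_row_sum (M : ℕ) (i : Fin M) : ∑ j : Fin M, (1 : Matrix (Fin M) (Fin M) ℝ) i j = 1 := by
  simp [Matrix.one_apply]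

lemma Dh_row_sum (M : ℕ) (h : ℝ) (hM : 2 ≤ M) (i : Fin M × Fin M) :
    ∑ j : Fin M × Fin M, Dh M h i j = 0 := by
  obtain ⟨i1, i2⟩ := i
  have expand : ∀ j1 j2 : Fin M, Dh M h (i1, i2) (j1, j2) =
      (1 : Matrix (Fin M) (Fin M) ℝ) i1 j1 * Gmat M h i2 j2
        + Gmat M h i1 j1 * (1 : Matrix (Fin M) (Fin M) ℝ) i2 j2 := fun _ _ => rfl
  rw [Fintype.sum_prod_type]
  have step : ∀ j1 : Fin M, ∑ j2 : Fin M, Dh M h (i1, i2) (j1, j2) =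
      (1 : Matrix (Fin M) (Fin M) ℝ) i1 j1 * (∑ j2 : Fin M, Gmat M h i2 j2)
        + Gmat M h i1 j1 * (∑ j2 : Fin M, (1 : Matrix (Fin M) (Fin M) ℝ) i2 j2) := by
    intro j1
    rw [Finset.mul_sum, Finset.mul_sum, ← Finset.sum_add_distrib]
    exact Finset.sum_congr rfl fun j2 _ => expand j1 j2
  rw [Finset.sum_congr rfl fun j1 _ => step j1]
  simp [Gmat_row_sum M h hM, one_row_sum]

lemma Dh_offdiag (M : ℕ) (h : ℝ) {i j : Fin M × Fin M} (hij : i ≠ j) : 0 ≤ Dh M h i j := by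
  obtain ⟨i1, i2⟩ := i; obtain ⟨j1, j2⟩ := j
  simp only [Dh, Matrix.add_apply, Matrix.kroneckerMap_apply, Matrix.one_apply]
  by_cases h1 : i1 = j1
  · have h2 : i2 ≠ j2 := fun hc => hij (by rw [h1, hc])
    rw [if_pos h1, if_neg h2, one_mul, mul_zero, add_zero]
    exact Gmat_offdiag M h h2
  · rw [if_neg h1, zero_mul, zero_add]
    by_cases h2 : i2 = j2
    · rw [if_pos h2, mul_one]; exact Gmat_offdiag M h h1
    · rw [if_neg h2, mul_zero]

lemma Dh_max_principle (M : ℕ) (h : ℝ) (hM : 2 ≤ M) (v : Fin M × Fin M → ℝ)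
    (i : Fin M × Fin M) (hmax : ∀ j, v j ≤ v i) : (Dh M h).mulVec v i ≤ 0 := by
  have key : (Dh M h).mulVec v i = ∑ j : Fin M × Fin M, Dh M h i j * (v j - v i) := by
    simp only [Matrix.mulVec, dotProduct, mul_sub, Finset.sum_sub_distrib,
      ← Finset.sum_mul, Dh_row_sum M h hM i, zero_mul, sub_zero]
  rw [key]
  apply Finset.sum_nonpos
  intro j _
  by_cases hji : j = i
  · simp [hji]
  · exact mul_nonpos_of_nonneg_of_nonpos (Dh_offdiag M h (fun hc => hji hc.symm)) (by linarith [hmax j])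

/-- MBP preservation of the first-order stabilized L1 scheme: if `‖Φ⁰‖_∞ ≤ 1` and
`Σ_{k=0}^n a^{(n)}_{n-k}(Φ^{k+1} - Φ^k) + κΦ^{n+1} - ε²D_hΦ^{n+1} + f_κ(Φⁿ) = 0`
for all `0 ≤ n ≤ N-1`, then `‖Φⁿ‖_∞ ≤ 1` for all `0 ≤ n ≤ N`, regardless of the
time-step sizes. The norm on `Fin M × Fin M → ℝ` is the sup norm. -/
theorem stmt16 (α T h ε κ : ℝ) (hα0 : 0 < α) (hα1 : α < 1)
    (hh : 0 < h) (hε : 0 < ε) (hκ : 2 ≤ κ)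
    (M N : ℕ) (hM : 2 ≤ M) (hN : 1 ≤ N) (t : ℕ → ℝ)
    (ht0 : t 0 = 0) (htT : t N = T)
    (hmono : ∀ n, n < N → t n < t (n + 1))
    (Φ : ℕ → Fin M × Fin M → ℝ) (hΦ0 : ‖Φ 0‖ ≤ 1)
    (hscheme : ∀ n, n ≤ N - 1 →
      (∑ k ∈ Finset.range (n + 1), L1kernel α t n (n - k) • (Φ (k + 1) - Φ k))
        + κ • Φ (n + 1) - ε ^ 2 • (Dh M h).mulVec (Φ (n + 1))
        + (fun i => (Φ n i) ^ 3 - (1 + κ) * Φ n i) = 0) :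
    ∀ n, n ≤ N → ‖Φ n‖ ≤ 1 := by
  have tmono : ∀ j i : ℕ, i ≤ j → j ≤ N → t i ≤ t j := by
    intro j
    induction j with
    | zero => intro i h1 _; rw [Nat.le_zero.mp h1]
    | succ m ih =>
      intro i h1 h2
      by_cases heq : i = m + 1
      · rw [heq]
      · exact le_trans (ih i (by omega) (by omega)) (hmono m (by omega)).le
  intro n
  induction n using Nat.strong_induction_on with
  | _ n ih =>
    intro hnN
    cases n with
    | zero => exact hΦ0
    | succ m =>
      have hbound : ∀ k, k ≤ m → ∀ i, |Φ k i| ≤ 1 := by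
        intro k hk i
        calc |Φ k i| = ‖Φ k i‖ := (Real.norm_eq_abs _).symm
          _ ≤ ‖Φ k‖ := norm_le_pi_norm _ i
          _ ≤ 1 := ih k (by omega) (by omega)
      have hstep : ∀ k, k ≤ m → t k < t (k + 1) := fun k hk => hmono k (by omega)
      have hupper : ∀ k, k ≤ m → t (k + 1) ≤ t (m + 1) := fun k hk =>
        tmono (m + 1) (k + 1) (by omega) (by omega)
      have hApos : ∀ k, k ≤ m → 0 < L1kernel α t m (m - k) := by
        intro k hk
        rw [L1kernel_eq α t m k hk]
        exact kernel_pos α _ _ _ hα0 hα1 (hstep k hk) (hupper k hk)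
      have hAmono : ∀ k, k < m → L1kernel α t m (m - k) ≤ L1kernel α t m (m - (k + 1)) := by
        intro k hk
        rw [L1kernel_eq α t m k (by omega), L1kernel_eq α t m (k + 1) (by omega)]
        exact kernel_mono α (t k) (t (k + 1)) (t (k + 2)) (t (m + 1)) hα0 hα1
          (hstep k (by omega)) (hstep (k + 1) (by omega)) (hupper (k + 1) (by omega))
      haveI : Nonempty (Fin M) := ⟨⟨0, by omega⟩⟩
      obtain ⟨i₀, hi₀⟩ := Finite.exists_max (fun j => |Φ (m + 1) j|)
      rw [pi_norm_le_iff_of_nonneg (by norm_num : (0:ℝ) ≤ 1)]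
      intro j
      rw [Real.norm_eq_abs]
      refine le_trans (hi₀ j) ?_
      have hsi := congrFun (hscheme m (by omega)) i₀
      simp only [Pi.add_apply, Pi.sub_apply, Pi.smul_apply, Finset.sum_apply, smul_eq_mul,
        Pi.zero_apply] at hsi
      rw [abel_sum (fun k => L1kernel α t m (m - k)) (fun k => Φ k i₀) m] at hsi
      -- bound on the history sum
      have hS : |∑ k ∈ Finset.range m, (L1kernel α t m (m - (k + 1)) - L1kernel α t m (m - k))
          * Φ (k + 1) i₀| ≤ L1kernel α t m (m - m) - L1kernel α t m (m - 0) := by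
        calc |∑ k ∈ Finset.range m, (L1kernel α t m (m - (k + 1)) - L1kernel α t m (m - k))
              * Φ (k + 1) i₀|
            ≤ ∑ k ∈ Finset.range m, |(L1kernel α t m (m - (k + 1)) - L1kernel α t m (m - k))
              * Φ (k + 1) i₀| := Finset.abs_sum_le_sum_abs _ _
          _ ≤ ∑ k ∈ Finset.range m,
              (L1kernel α t m (m - (k + 1)) - L1kernel α t m (m - k)) := by
              apply Finset.sum_le_sum
              intro k hk
              have hk' := Finset.mem_range.mp hk
              have hd : 0 ≤ L1kernel α t m (m - (k + 1)) - L1kernel α t m (m - k) := by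
                linarith [hAmono k hk']
              rw [abs_mul, abs_of_nonneg hd]
              calc (L1kernel α t m (m - (k + 1)) - L1kernel α t m (m - k)) * |Φ (k + 1) i₀|
                  ≤ (L1kernel α t m (m - (k + 1)) - L1kernel α t m (m - k)) * 1 :=
                    mul_le_mul_of_nonneg_left (hbound (k + 1) (by omega) i₀) hd
                _ = _ := mul_one _
          _ = L1kernel α t m (m - m) - L1kernel α t m (m - 0) :=
              Finset.sum_range_sub (fun k => L1kernel α t m (m - k)) m
      have hf := fcube_bound κ (Φ m i₀) hκ (hbound m le_rfl i₀)
      have hΦ0i := hbound 0 (by omega) i₀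
      have hAm := hApos m le_rfl
      have hA0 := hApos 0 (by omega)
      have hSl := (abs_le.mp hS).1
      have hSr := (abs_le.mp hS).2
      have hfl := (abs_le.mp hf).1
      have hfr := (abs_le.mp hf).2
      have hΦ0l := (abs_le.mp hΦ0i).1
      have hΦ0r := (abs_le.mp hΦ0i).2
      rcases le_or_gt 0 (Φ (m + 1) i₀) with hv | hv
      · rw [abs_of_nonneg hv]
        have hDle : (Dh M h).mulVec (Φ (m + 1)) i₀ ≤ 0 := by
          apply Dh_max_principle M h hM _ i₀
          intro j'
          calc Φ (m + 1) j' ≤ |Φ (m + 1) j'| := le_abs_self _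
            _ ≤ |Φ (m + 1) i₀| := hi₀ j'
            _ = Φ (m + 1) i₀ := abs_of_nonneg hv
        have e1 : ε ^ 2 * (Dh M h).mulVec (Φ (m + 1)) i₀ ≤ 0 :=
          mul_nonpos_of_nonneg_of_nonpos (sq_nonneg ε) hDle
        have e2 : L1kernel α t m (m - 0) * Φ 0 i₀ ≥ -L1kernel α t m (m - 0) := by nlinarith
        nlinarith [hsi, e1, e2, hSr, hfl, hAm]
      · rw [abs_of_neg hv]
        have hDge : 0 ≤ (Dh M h).mulVec (Φ (m + 1)) i₀ := by
          have hneg : (Dh M h).mulVec (fun j' => -Φ (m + 1) j') i₀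
              = -(Dh M h).mulVec (Φ (m + 1)) i₀ := by
            simp [Matrix.mulVec, dotProduct, mul_neg, Finset.sum_neg_distrib]
          have := Dh_max_principle M h hM (fun j' => -Φ (m + 1) j') i₀ ?_
          · rw [hneg] at this; linarith
          · intro j'
            show -Φ (m + 1) j' ≤ -Φ (m + 1) i₀
            calc -Φ (m + 1) j' ≤ |Φ (m + 1) j'| := neg_le_abs _
              _ ≤ |Φ (m + 1) i₀| := hi₀ j'
              _ = -Φ (m + 1) i₀ := abs_of_neg hv
        have e1 : 0 ≤ ε ^ 2 * (Dh M h).mulVec (Φ (m + 1)) i₀ :=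
          mul_nonneg (sq_nonneg ε) hDge
        have e2 : L1kernel α t m (m - 0) * Φ 0 i₀ ≤ L1kernel α t m (m - 0) := by nlinarith
        nlinarith [hsi, e1, e2, hSl, hfr, hAm]
end
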